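/- arXiv:math/0512067 — 4 statements merged into one kernel-verified Lean document; each statement's English description precedes it below -/
import Mathlib

section
/- For every connected graph Γ, there exists at most one strong congruence π of Γ such that χ(Γ/π) = 1. -/
noncomputable section

open Filter Topology

/-- A finite, directed, edge-colored graph with colors in `Fin s`,
with vertices living in an ambient type `V`. -/
structure CGraph (V : Type) (s : ℕ) where
  verts : Set V
  finite : verts.Finite
  nonem : verts.Nonempty
  E : Fin s → V → V → Prop
  memL : ∀ r a b, E r a b → a ∈ verts
  memR : ∀ r a b, E r a b → b ∈ verts

namespace CGraph

variable {V W : Type} {s : ℕ}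

/-- A graph is trivial iff it has no edges (of any color). -/
def Trivial (Γ : CGraph V s) : Prop := ∀ r a b, ¬ Γ.E r a b

/-- Two vertices are adjacent iff there is an edge (of any color, either direction)
between them. -/
def Adj (Γ : CGraph V s) (a b : V) : Prop := ∃ r, Γ.E r a b ∨ Γ.E r b a

/-- A graph is connected iff any two of its vertices are joined by a finite chain of
edges (of any colors and either direction). -/
def Connected (Γ : CGraph V s) : Prop :=
  ∀ a ∈ Γ.verts, ∀ b ∈ Γ.verts, Relation.ReflTransGen Γ.Adj a b

/-- `Γ'` is a subgraph of `Γ`. -/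
def Subgraph (Γ' Γ : CGraph V s) : Prop :=
  Γ'.verts ⊆ Γ.verts ∧ ∀ r a b, Γ'.E r a b → Γ.E r a b

/-- `C` is a connected component of `Γ`: a maximal connected subgraph. -/
def IsComponent (C Γ : CGraph V s) : Prop :=
  C.Subgraph Γ ∧ C.Connected ∧
    ∀ C' : CGraph V s, C'.Subgraph Γ → C'.Connected → C.Subgraph C' → C'.Subgraph C

/-- A graph is admissible iff no two distinct edges of the same color begin at the
same vertex or end at the same vertex. -/
def Admissible (Γ : CGraph V s) : Prop :=
  (∀ r a b b', Γ.E r a b → Γ.E r a b' → b = b') ∧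
    (∀ r a a' b, Γ.E r a b → Γ.E r a' b → a = a')

/-- `Γ.mono r` is `Γ` with all edges not of color `r` removed. -/
def mono (Γ : CGraph V s) (r : Fin s) : CGraph V s where
  verts := Γ.verts
  finite := Γ.finite
  nonem := Γ.nonem
  E := fun r' a b => r' = r ∧ Γ.E r' a b
  memL := fun r' a b h => Γ.memL r' a b h.2
  memR := fun r' a b h => Γ.memR r' a b h.2

/-- An `r`-path of `Γ` is a non-trivial connected component of `Γ.mono r`. -/
def IsRPath (P Γ : CGraph V s) (r : Fin s) : Prop :=
  P.IsComponent (Γ.mono r) ∧ ¬ P.Trivial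

/-- A path of `Γ` is an `r`-path for some color `r`. -/
def IsPathOf (P Γ : CGraph V s) : Prop := ∃ r, P.IsRPath Γ r

/-- A path is closed (a closed circuit) iff every one of its vertices has an
outgoing edge. -/
def Closed (P : CGraph V s) : Prop := ∀ a ∈ P.verts, ∃ r b, P.E r a b

/-- A loop of `Γ` is a path of `Γ` which is a closed circuit. -/
def IsLoopOf (P Γ : CGraph V s) : Prop := P.IsPathOf Γ ∧ P.Closed

/-- A string of `Γ` is a path of `Γ` which is not a loop. -/
def IsStringOf (P Γ : CGraph V s) : Prop := P.IsPathOf Γ ∧ ¬ P.Closed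

/-- The number of edges of `Γ` (counting colors). -/
def edgeCount (Γ : CGraph V s) : ℕ :=
  Nat.card {p : Fin s × V × V // Γ.E p.1 p.2.1 p.2.2}

/-- The number of loops (of any color) of `Γ`. -/
def loopCount (Γ : CGraph V s) : ℕ :=
  Nat.card {P : CGraph V s // P.IsLoopOf Γ}

/-- The number of vertices of `Γ`. -/
def vertCount (Γ : CGraph V s) : ℕ := Nat.card Γ.verts

/-- The loop-characteristic `χ(Γ) = V(Γ) - E(Γ) + L(Γ)`. -/
def chi (Γ : CGraph V s) : ℤ :=
  (Γ.vertCount : ℤ) - (Γ.edgeCount : ℤ) + (Γ.loopCount : ℤ)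

/-- `Γ.erase P` is the graph obtained from `Γ` by removing all edges of `P`. -/
def erase (Γ P : CGraph V s) : CGraph V s where
  verts := Γ.verts
  finite := Γ.finite
  nonem := Γ.nonem
  E := fun r a b => Γ.E r a b ∧ ¬ P.E r a b
  memL := fun r a b h => Γ.memL r a b h.1
  memR := fun r a b h => Γ.memR r a b h.1

/-- A graph is strongly admissible (w.r.t. `d : Fin s → ℕ∞`) iff it is admissible,
every `r`-loop has length `d r`, and every `r`-string has length `< d r`. -/
def StronglyAdmissible (d : Fin s → ℕ∞) (Γ : CGraph V s) : Prop :=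
  Γ.Admissible ∧ ∀ r P, IsRPath P Γ r →
    (P.Closed → (P.edgeCount : ℕ∞) = d r) ∧ (¬ P.Closed → (P.edgeCount : ℕ∞) < d r)

/-- The quotient of `Γ` by a partition (setoid) `π` of the ambient vertex type. -/
def quot (Γ : CGraph V s) (π : Setoid V) : CGraph (Quotient π) s where
  verts := Quotient.mk π '' Γ.verts
  finite := Γ.finite.image _
  nonem := Γ.nonem.image _
  E := fun r A B => ∃ a b, Γ.E r a b ∧ Quotient.mk π a = A ∧ Quotient.mk π b = B
  memL := fun r A B h => by
    obtain ⟨a, b, he, ha, hb⟩ := h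
    exact ⟨a, Γ.memL r a b he, ha⟩
  memR := fun r A B h => by
    obtain ⟨a, b, he, ha, hb⟩ := h
    exact ⟨b, Γ.memR r a b he, hb⟩

/-- `π` is a congruence of `Γ`: for any two edges of the same color, the source
blocks agree iff the target blocks agree. -/
def IsCongruence (Γ : CGraph V s) (π : Setoid V) : Prop :=
  ∀ r a₁ b₁ a₂ b₂, Γ.E r a₁ b₁ → Γ.E r a₂ b₂ → (π.r a₁ a₂ ↔ π.r b₁ b₂)

/-- `π` is a strong congruence of `Γ`: a congruence whose quotient is strongly
admissible. -/
def IsStrongCongruence (d : Fin s → ℕ∞) (Γ : CGraph V s) (π : Setoid V) : Prop :=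
  Γ.IsCongruence π ∧ (Γ.quot π).StronglyAdmissible d

/-- Isomorphism of edge-colored graphs: a bijection between the vertex sets
preserving the `r`-edges in both directions, for every color `r`. -/
def Iso (Γ₁ : CGraph V s) (Γ₂ : CGraph W s) : Prop :=
  ∃ Φ : V → W, Set.BijOn Φ Γ₁.verts Γ₂.verts ∧
    ∀ r a b, a ∈ Γ₁.verts → b ∈ Γ₁.verts → (Γ₂.E r (Φ a) (Φ b) ↔ Γ₁.E r a b)


/- ============ Section A : components of one color ============ -/

theorem ext_graph {Γ Γ' : CGraph V s} (hv : Γ.verts = Γ'.verts) (hE : Γ.E = Γ'.E) :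
    Γ = Γ' := by
  cases Γ; cases Γ'; simp_all

/-- One-color adjacency. -/
def AdjR (Γ : CGraph V s) (r : Fin s) (a b : V) : Prop := Γ.E r a b ∨ Γ.E r b a

/-- Same `r`-component relation. -/
def InSame (Γ : CGraph V s) (r : Fin s) (a b : V) : Prop :=
  Relation.ReflTransGen (Γ.AdjR r) a b

/-- A directed `r`-chain of length `k`. -/
def IsChainN (Γ : CGraph V s) (r : Fin s) (c : ℕ → V) (k : ℕ) : Prop :=
  ∀ i, i < k → Γ.E r (c i) (c (i + 1))

def HasOut (Γ : CGraph V s) (r : Fin s) (a : V) : Prop := ∃ b, Γ.E r a b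

def ClassClosed (Γ : CGraph V s) (r : Fin s) (a : V) : Prop :=
  ∀ b, Γ.InSame r a b → Γ.HasOut r b

variable {Γ : CGraph V s} {r : Fin s}

lemma AdjR.symm {a b : V} (h : Γ.AdjR r a b) : Γ.AdjR r b a := h.elim Or.inr Or.inl

lemma InSame.refl (a : V) : Γ.InSame r a a := Relation.ReflTransGen.refl

lemma InSame.symm {a b : V} (h : Γ.InSame r a b) : Γ.InSame r b a :=
  by haveI : Std.Symm (Γ.AdjR r) := ⟨fun _ _ h => AdjR.symm h⟩; exact Relation.ReflTransGen.symmetric.symm _ _ h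

lemma InSame.trans {a b c : V} (h : Γ.InSame r a b) (h' : Γ.InSame r b c) :
    Γ.InSame r a c := Relation.ReflTransGen.trans h h'

lemma InSame.of_edge {a b : V} (h : Γ.E r a b) : Γ.InSame r a b :=
  Relation.ReflTransGen.single (Or.inl h)

lemma InSame.mem_verts {a b : V} (ha : a ∈ Γ.verts) (h : Γ.InSame r a b) : b ∈ Γ.verts := by
  induction h with
  | refl => exact ha
  | tail _ hstep ih => exact hstep.elim (fun h => Γ.memR _ _ _ h) (fun h => Γ.memL _ _ _ h)

lemma inSame_class_eq {a b : V} (h : Γ.InSame r a b) :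
    {x | Γ.InSame r a x} = {x | Γ.InSame r b x} := by
  ext x; exact ⟨fun hx => h.symm.trans hx, fun hx => h.trans hx⟩

lemma ClassClosed.of_inSame {a b : V} (h : Γ.InSame r a b) (hc : Γ.ClassClosed r a) :
    Γ.ClassClosed r b := fun x hx => hc x (h.trans hx)

/- chains -/

lemma IsChainN.inSame {c : ℕ → V} {k : ℕ} (hc : Γ.IsChainN r c k) {i : ℕ} (hi : i ≤ k) :
    Γ.InSame r (c 0) (c i) := by
  induction i with
  | zero => exact InSame.refl _
  | succ n ih =>
      exact (ih (le_of_lt (Nat.lt_of_succ_le hi))).trans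
        (InSame.of_edge (hc n (Nat.lt_of_succ_le hi)))

lemma IsChainN.mono_len {c : ℕ → V} {k k' : ℕ} (hc : Γ.IsChainN r c k) (h : k' ≤ k) :
    Γ.IsChainN r c k' := fun i hi => hc i (lt_of_lt_of_le hi h)

lemma IsChainN.shift {c : ℕ → V} {k : ℕ} (hc : Γ.IsChainN r c k) (t : ℕ) :
    Γ.IsChainN r (fun i => c (i + t)) (k - t) := by
  intro i hi
  have : i + t < k := by omega
  simpa [Nat.add_right_comm] using hc (i + t) this

lemma chain_single {a b : V} (h : Γ.E r a b) :
    ∃ c, Γ.IsChainN r c 1 ∧ c 0 = a ∧ c 1 = b := by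
  refine ⟨fun i => if i = 0 then a else b, ?_, by simp, by simp⟩
  intro i hi
  have : i = 0 := by omega
  subst this; simpa using h

lemma IsChainN.snoc {c : ℕ → V} {k : ℕ} (hc : Γ.IsChainN r c k) {z : V}
    (hz : Γ.E r (c k) z) :
    ∃ c' : ℕ → V, Γ.IsChainN r c' (k + 1) ∧ (∀ i ≤ k, c' i = c i) ∧ c' (k + 1) = z := by
  refine ⟨fun i => if i ≤ k then c i else z, ?_, ?_, ?_⟩
  · intro i hi
    rcases Nat.lt_or_ge i k with h | h
    · simpa [Nat.le_of_lt h, Nat.succ_le_of_lt h] using hc i h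
    · have : i = k := by omega
      subst this
      simp [hz]
  · intro i hi; simp [hi]
  · simp

lemma IsChainN.cons {c : ℕ → V} {k : ℕ} (hc : Γ.IsChainN r c k) {z : V}
    (hz : Γ.E r z (c 0)) :
    ∃ c' : ℕ → V, Γ.IsChainN r c' (k + 1) ∧ c' 0 = z ∧ (∀ i, c' (i + 1) = c i) := by
  refine ⟨fun i => if i = 0 then z else c (i - 1), ?_, by simp, fun i => by simp⟩
  intro i hi
  rcases Nat.eq_zero_or_pos i with rfl | hpos
  · simpa using hz
  · have h1 : ¬ (i = 0) := by omega
    have h2 : ¬ (i + 1 = 0) := by omega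
    simp only [h1, h2, if_false, Nat.add_sub_cancel]
    have heq : i - 1 + 1 = i := by omega
    have := hc (i - 1) (by omega)
    rwa [heq] at this

/-- determinism of chains in admissible graphs -/
lemma chain_det (hadm : Γ.Admissible) {c c' : ℕ → V} {k k' : ℕ}
    (hc : Γ.IsChainN r c k) (hc' : Γ.IsChainN r c' k') (h0 : c 0 = c' 0) :
    ∀ i, i ≤ k → i ≤ k' → c i = c' i := by
  intro i
  induction i with
  | zero => intro _ _; exact h0
  | succ n ih =>
      intro h1 h2
      have hn := ih (by omega) (by omega)
      exact hadm.1 r (c n) _ _ (hc n (by omega)) (hn ▸ hc' n (by omega))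

/-- comparability: two vertices of the same `r`-component are joined by a directed chain -/
lemma inSame_comparable (hadm : Γ.Admissible) {x y : V} (h : Γ.InSame r x y) :
    (∃ c k, Γ.IsChainN r c k ∧ c 0 = x ∧ c k = y) ∨
      (∃ c k, Γ.IsChainN r c k ∧ c 0 = y ∧ c k = x) := by
  induction h with
  | refl => exact Or.inl ⟨fun _ => x, 0, fun i hi => absurd hi (Nat.not_lt_zero i), rfl, rfl⟩
  | @tail b z hxb hstep ih =>
      rcases ih with ⟨c, k, hc, hc0, hck⟩ | ⟨c, k, hc, hc0, hck⟩
      · rcases hstep with he | he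
        · -- chain x → b, edge b → z : extend
          obtain ⟨c', hc', heq, hlast⟩ := hc.snoc (by rwa [hck])
          exact Or.inl ⟨c', k + 1, hc', by rw [heq 0 (Nat.zero_le _), hc0], hlast⟩
        · -- chain x → b, edge z → b
          rcases Nat.eq_zero_or_pos k with rfl | hk
          · -- x = b : single chain z → x
            obtain ⟨c', hc', h0, h1⟩ := chain_single (show Γ.E r z x by
              rw [← hc0, hck]; exact he)
            exact Or.inr ⟨c', 1, hc', h0, h1⟩
          · have hlast : Γ.E r (c (k - 1)) (c k) := by
              have := hc (k - 1) (by omega)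
              have hkk : k - 1 + 1 = k := by omega
              rwa [hkk] at this
            have hz : z = c (k - 1) := hadm.2 r _ _ _ (hck ▸ he) hlast
            exact Or.inl ⟨c, k - 1, hc.mono_len (by omega), hc0, hz.symm⟩
      · rcases hstep with he | he
        · -- chain b → x, edge b → z
          rcases Nat.eq_zero_or_pos k with rfl | hk
          · -- b = x : single chain x → z
            obtain ⟨c', hc', h0, h1⟩ := chain_single (show Γ.E r x z by
              rw [← hck, show c 0 = b from hc0]; exact he)
            exact Or.inl ⟨c', 1, hc', h0, h1⟩
          · have hfirst : Γ.E r (c 0) (c 1) := hc 0 hk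
            have hz : z = c 1 := hadm.1 r _ _ _ (hc0 ▸ he) hfirst
            refine Or.inr ⟨fun i => c (i + 1), k - 1, hc.shift 1, hz.symm, ?_⟩
            simp only []
            have : k - 1 + 1 = k := by omega
            rw [this, hck]
        · -- chain b → x, edge z → b : prepend
          obtain ⟨c', hc', h0, hsh⟩ := hc.cons (hc0 ▸ he)
          refine Or.inr ⟨c', k + 1, hc', h0, by rw [hsh k, hck]⟩

/- ============ Section A2 : closed and open classes ============ -/

lemma classClosed_of_cycle (hadm : Γ.Admissible) {c : ℕ → V} {k : ℕ}
    (hc : Γ.IsChainN r c k) (hk : 1 ≤ k) (hcy : c k = c 0) :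
    Γ.ClassClosed r (c 0) := by
  set O : Set V := c '' Set.Iio k with hO
  have hmemO : c 0 ∈ O := ⟨0, by simp [Set.mem_Iio]; omega, rfl⟩
  have hout : ∀ x ∈ O, Γ.HasOut r x := by
    rintro x ⟨i, hi, rfl⟩; exact ⟨c (i + 1), hc i hi⟩
  have hclosure : ∀ x ∈ O, ∀ z, Γ.AdjR r x z → z ∈ O := by
    rintro x ⟨i, hi, rfl⟩ z hz
    simp only [Set.mem_Iio] at hi
    rcases hz with he | he
    · have hzc : z = c (i + 1) := hadm.1 r _ _ _ he (hc i hi)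
      subst hzc
      rcases Nat.lt_or_ge (i + 1) k with h | h
      · exact ⟨i + 1, h, rfl⟩
      · have : i + 1 = k := by omega
        rw [this, hcy]; exact hmemO
    · rcases Nat.eq_zero_or_pos i with rfl | hpos
      · have hin : Γ.E r (c (k - 1)) (c 0) := by
          have := hc (k - 1) (by omega)
          rwa [show k - 1 + 1 = k by omega, hcy] at this
        have : z = c (k - 1) := hadm.2 r _ _ _ he hin
        exact this ▸ ⟨k - 1, by simp [Set.mem_Iio]; omega, rfl⟩
      · have hin : Γ.E r (c (i - 1)) (c i) := by
          have := hc (i - 1) (by omega)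
          rwa [show i - 1 + 1 = i by omega] at this
        have : z = c (i - 1) := hadm.2 r _ _ _ he hin
        exact this ▸ ⟨i - 1, by simp [Set.mem_Iio]; omega, rfl⟩
  intro b hb
  refine hout b ?_
  induction hb with
  | refl => exact hmemO
  | tail hxb hstep ih => exact hclosure _ ih _ hstep

lemma class_finite {a : V} (ha : a ∈ Γ.verts) : Finite {x // Γ.InSame r a x} := by
  have : {x | Γ.InSame r a x} ⊆ Γ.verts := fun x hx => InSame.mem_verts ha hx
  exact (Γ.finite.subset this).to_subtype

/-- All the facts we need about a closed class. -/
lemma closed_class_facts (hadm : Γ.Admissible) {a : V} (ha : a ∈ Γ.verts)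
    (hcl : Γ.ClassClosed r a) :
    (∀ c k, Γ.IsChainN r c k → c 0 = a → c k = a → 1 ≤ k →
        Nat.card {x // Γ.InSame r a x} ∣ k) ∧
      (∀ c k t, Γ.IsChainN r c k → c 0 = a → Nat.card {x // Γ.InSame r a x} ∣ t → t ≤ k →
        c t = a) := by
  haveI : Finite {x // Γ.InSame r a x} := class_finite ha
  set T := {x // Γ.InSame r a x} with hT
  let f : T → T := fun x => ⟨Classical.choose (hcl x.1 x.2),
    x.2.trans (InSame.of_edge (Classical.choose_spec (hcl x.1 x.2)))⟩
  have hfE : ∀ x : T, Γ.E r x.1 (f x).1 := fun x => Classical.choose_spec (hcl x.1 x.2)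
  have hfinj : Function.Injective f := by
    intro x y hxy
    exact Subtype.ext (hadm.2 r _ _ _ (hfE x) (by rw [hxy]; exact hfE y))
  set x0 : T := ⟨a, InSame.refl a⟩ with hx0
  have hiter : ∀ (c : ℕ → V) k, Γ.IsChainN r c k → c 0 = a →
      ∀ i, i ≤ k → c i = (f^[i] x0).1 := by
    intro c k hc h0 i
    induction i with
    | zero => intro _; simpa using h0
    | succ n ih =>
        intro hn
        have h1 : c n = (f^[n] x0).1 := ih (by omega)
        have h2 : Γ.E r (f^[n] x0).1 (f^[n+1] x0).1 := by
          rw [Function.iterate_succ_apply']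
          exact hfE _
        exact hadm.1 r _ _ _ (hc n (by omega)) (h1 ▸ h2)
  -- x0 is periodic
  have hper : x0 ∈ Function.periodicPts f := by
    obtain ⟨i, j, hij, hEq⟩ := Finite.exists_ne_map_eq_of_infinite (fun i : ℕ => f^[i] x0)
    rcases Nat.lt_or_ge i j with h | h
    · refine ⟨j - i, by omega, ?_⟩
      have : f^[i] (f^[j-i] x0) = f^[i] x0 := by
        rw [← Function.iterate_add_apply]
        rw [show i + (j - i) = j by omega]
        exact hEq.symm
      exact (hfinj.iterate i) this
    · have h' : j < i := by omega
      refine ⟨i - j, by omega, ?_⟩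
      have : f^[j] (f^[i-j] x0) = f^[j] x0 := by
        rw [← Function.iterate_add_apply]
        rw [show j + (i - j) = i by omega]
        exact hEq
      exact (hfinj.iterate j) this
  set m := Function.minimalPeriod f x0 with hm
  have hm1 : 1 ≤ m := Function.minimalPeriod_pos_of_mem_periodicPts hper
  have hmp : f^[m] x0 = x0 := Function.isPeriodicPt_minimalPeriod f x0
  -- the orbit covers the class
  have horb : ∀ b, Γ.InSame r a b → ∃ i, (f^[i] x0).1 = b := by
    intro b hb
    induction hb with
    | refl => exact ⟨0, rfl⟩
    | @tail b' b hab' hstep ih =>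
        obtain ⟨i, hi⟩ := ih
        rcases hstep with he | he
        · refine ⟨i + 1, ?_⟩
          have h2 : Γ.E r (f^[i] x0).1 (f^[i+1] x0).1 := by
            rw [Function.iterate_succ_apply']; exact hfE _
          exact hadm.1 r _ _ _ h2 (hi ▸ he)
        · -- he : E b b' ; b' = (f^[i] x0).1
          rcases Nat.eq_zero_or_pos i with rfl | hpos
          · -- b' = a; use wrap-around in-edge
            refine ⟨m - 1, ?_⟩
            have h2 : Γ.E r (f^[m-1] x0).1 (f^[m] x0).1 := by
              have h3 := hfE (f^[m-1] x0)
              rwa [← Function.iterate_succ_apply' f (m-1) x0, Nat.succ_eq_add_one,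
                show m - 1 + 1 = m by omega] at h3
            rw [hmp] at h2
            have hb'a : b' = (x0 : T).1 := hi.symm
            exact hadm.2 r _ _ _ h2 (by rw [hb'a] at he; exact he)
          · refine ⟨i - 1, ?_⟩
            have h2 : Γ.E r (f^[i-1] x0).1 (f^[i] x0).1 := by
              have h3 := hfE (f^[i-1] x0)
              rwa [← Function.iterate_succ_apply' f (i-1) x0, Nat.succ_eq_add_one,
                show i - 1 + 1 = i by omega] at h3
            exact hadm.2 r _ _ _ h2 (hi ▸ he)
  -- Nat.card T = m
  have hcard : Nat.card T = m := by
    have hbij : Function.Bijective (fun i : Fin m => f^[i.1] x0) := by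
      constructor
      · intro i j hEq
        have := Function.iterate_injOn_Iio_minimalPeriod (f := f) (x := x0)
          (Set.mem_Iio.mpr i.2) (Set.mem_Iio.mpr j.2) hEq
        exact Fin.ext this
      · intro y
        obtain ⟨i, hi⟩ := horb y.1 y.2
        refine ⟨⟨i % m, Nat.mod_lt _ (by omega)⟩, ?_⟩
        have hmod := Function.iterate_mod_minimalPeriod_eq (f := f) (x := x0) (n := i)
        exact Subtype.ext (by show (f^[i % m] x0).1 = y.1; rw [hm, hmod, hi])
    calc Nat.card T = Nat.card (Fin m) := (Nat.card_eq_of_bijective _ hbij).symm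
      _ = m := Nat.card_eq_fintype_card.trans (Fintype.card_fin m)
  constructor
  · intro c k hc h0 hk hk1
    have : (f^[k] x0).1 = a := by rw [← hiter c k hc h0 k le_rfl, hk]
    have hpk : Function.IsPeriodicPt f k x0 := Subtype.ext this
    rw [hcard]
    exact hpk.minimalPeriod_dvd
  · intro c k t hc h0 hdvd ht
    rw [hcard] at hdvd
    have hpt : Function.IsPeriodicPt f t x0 :=
      Function.isPeriodicPt_iff_minimalPeriod_dvd.2 hdvd
    rw [hiter c k hc h0 t ht, hpt]

lemma not_closed_chain_inj (hadm : Γ.Admissible) {c : ℕ → V} {k : ℕ}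
    (hc : Γ.IsChainN r c k) (hnc : ¬ Γ.ClassClosed r (c 0)) :
    ∀ i j, i ≤ k → j ≤ k → c i = c j → i = j := by
  have key : ∀ i j, i < j → j ≤ k → c i = c j → False := by
    intro i j hij hjk hEq
    have hsub : Γ.IsChainN r (fun t => c (t + i)) (k - i) := hc.shift i
    have hcy : (fun t => c (t + i)) (j - i) = (fun t => c (t + i)) 0 := by
      simp only []
      rw [show j - i + i = j by omega, show 0 + i = i from by omega]
      exact hEq.symm
    have hclosed := classClosed_of_cycle hadm (hsub.mono_len (show j - i ≤ k - i by omega))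
      (by omega) hcy
    simp only [Nat.zero_add] at hclosed
    exact hnc (hclosed.of_inSame (hc.inSame (show i ≤ k by omega)).symm)
  intro i j hi hj hEq
  rcases lt_trichotomy i j with h | h | h
  · exact absurd (key i j h hj hEq) (by simp)
  · exact h
  · exact absurd (key j i h hi hEq.symm) (by simp)

lemma not_closed_chain_card (hadm : Γ.Admissible) {c : ℕ → V} {k : ℕ}
    (hc : Γ.IsChainN r c k) (hnc : ¬ Γ.ClassClosed r (c 0)) (h0 : c 0 ∈ Γ.verts) :
    k + 1 ≤ Nat.card {x // Γ.InSame r (c 0) x} := by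
  haveI : Finite {x // Γ.InSame r (c 0) x} := class_finite h0
  have hinj : Function.Injective (fun i : Fin (k + 1) =>
      (⟨c i.1, hc.inSame (by omega)⟩ : {x // Γ.InSame r (c 0) x})) := by
    intro i j hEq
    exact Fin.ext (not_closed_chain_inj hadm hc hnc i.1 j.1 (by omega) (by omega)
      (congrArg Subtype.val hEq))
  calc k + 1 = Nat.card (Fin (k + 1)) := by simp
    _ ≤ _ := Nat.card_le_card_of_injective _ hinj

lemma outless_unique (hadm : Γ.Admissible) {x y : V} (h : Γ.InSame r x y)
    (hx : ¬ Γ.HasOut r x) (hy : ¬ Γ.HasOut r y) : x = y := by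
  rcases inSame_comparable hadm h with ⟨c, k, hc, h0, hk⟩ | ⟨c, k, hc, h0, hk⟩
  · rcases Nat.eq_zero_or_pos k with rfl | hpos
    · rw [← h0, hk]
    · exact absurd ⟨c 1, h0 ▸ hc 0 hpos⟩ hx
  · rcases Nat.eq_zero_or_pos k with rfl | hpos
    · rw [← hk, h0]
    · exact absurd ⟨c 1, h0 ▸ hc 0 hpos⟩ hy

/- ============ Section B : the component subgraph ============ -/

def compOf (Γ : CGraph V s) (r : Fin s) (a : V) (ha : a ∈ Γ.verts) : CGraph V s where
  verts := {x | Γ.InSame r a x}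
  finite := Γ.finite.subset (fun _ hx => InSame.mem_verts ha hx)
  nonem := ⟨a, InSame.refl a⟩
  E := fun r' x y => r' = r ∧ Γ.E r x y ∧ Γ.InSame r a x ∧ Γ.InSame r a y
  memL := fun _ _ _ h => h.2.2.1
  memR := fun _ _ _ h => h.2.2.2

@[simp] lemma compOf_verts {a : V} (ha : a ∈ Γ.verts) :
    (compOf Γ r a ha).verts = {x | Γ.InSame r a x} := rfl

@[simp] lemma compOf_E {a : V} (ha : a ∈ Γ.verts) (r' : Fin s) (x y : V) :
    (compOf Γ r a ha).E r' x y ↔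
      (r' = r ∧ Γ.E r x y ∧ Γ.InSame r a x ∧ Γ.InSame r a y) := Iff.rfl

lemma compOf_connected {a : V} (ha : a ∈ Γ.verts) : (compOf Γ r a ha).Connected := by
  have key : ∀ u v, Γ.InSame r a u → Γ.InSame r u v →
      Relation.ReflTransGen (compOf Γ r a ha).Adj u v := by
    intro u v hu huv
    induction huv with
    | refl => exact Relation.ReflTransGen.refl
    | @tail b' b hub' hstep ih =>
        refine Relation.ReflTransGen.tail ih ?_
        have hb' : Γ.InSame r a b' := hu.trans hub'
        have hb : Γ.InSame r a b := hb'.trans (Relation.ReflTransGen.single hstep)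
        rcases hstep with he | he
        · exact ⟨r, Or.inl ⟨rfl, he, hb', hb⟩⟩
        · exact ⟨r, Or.inr ⟨rfl, he, hb, hb'⟩⟩
  intro x hx y hy
  exact key x y hx (InSame.symm hx |>.trans hy)

lemma compOf_isComponent {a : V} (ha : a ∈ Γ.verts) :
    (compOf Γ r a ha).IsComponent (Γ.mono r) := by
  refine ⟨⟨fun x hx => InSame.mem_verts (Γ := Γ) ha hx, ?_⟩, compOf_connected ha, ?_⟩
  · rintro r' x y ⟨rfl, he, _, _⟩
    exact ⟨rfl, he⟩
  · rintro C' ⟨hCv, hCE⟩ hCconn ⟨hv, hE⟩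
    have hsteps : ∀ u v, Relation.ReflTransGen C'.Adj u v → Γ.InSame r u v := by
      intro u v h
      induction h with
      | refl => exact InSame.refl _
      | tail _ hstep ih =>
          refine ih.trans ?_
          obtain ⟨r', hstep⟩ := hstep
          rcases hstep with he | he
          · obtain ⟨rfl, he⟩ := hCE _ _ _ he
            exact InSame.of_edge he
          · obtain ⟨rfl, he⟩ := hCE _ _ _ he
            exact (InSame.of_edge he).symm
    constructor
    · intro z hz
      have haC : a ∈ C'.verts := hv (InSame.refl a)
      exact hsteps a z (hCconn a haC z hz)
    · intro r' x y he
      obtain ⟨hr', he'⟩ := hCE _ _ _ he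
      have hx : Γ.InSame r a x := hsteps a x (hCconn a (hv (InSame.refl a)) x (C'.memL _ _ _ he))
      have hy : Γ.InSame r a y := hsteps a y (hCconn a (hv (InSame.refl a)) y (C'.memR _ _ _ he))
      exact ⟨hr', by rwa [hr'] at he', hx, hy⟩

lemma isComponent_eq_compOf {P : CGraph V s} (hP : P.IsComponent (Γ.mono r)) {a : V}
    (haP : a ∈ P.verts) (ha : a ∈ Γ.verts) : P = compOf Γ r a ha := by
  obtain ⟨⟨hPv, hPE⟩, hPconn, hPmax⟩ := hP
  have hsteps : ∀ u v, Relation.ReflTransGen P.Adj u v → Γ.InSame r u v := by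
    intro u v h
    induction h with
    | refl => exact InSame.refl _
    | tail _ hstep ih =>
        refine ih.trans ?_
        obtain ⟨r', hstep⟩ := hstep
        rcases hstep with he | he
        · obtain ⟨rfl, he⟩ := hPE _ _ _ he
          exact InSame.of_edge he
        · obtain ⟨rfl, he⟩ := hPE _ _ _ he
          exact (InSame.of_edge he).symm
  have hPsub : P.Subgraph (compOf Γ r a ha) := by
    constructor
    · intro z hz
      exact hsteps a z (hPconn a haP z hz)
    · intro r' x y he
      obtain ⟨hr', he'⟩ := hPE _ _ _ he
      exact ⟨hr', by rwa [hr'] at he', hsteps a x (hPconn a haP x (P.memL _ _ _ he)),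
        hsteps a y (hPconn a haP y (P.memR _ _ _ he))⟩
  have hsub2 := hPmax (compOf Γ r a ha)
    (compOf_isComponent ha).1 (compOf_connected ha) hPsub
  refine ext_graph ?_ ?_
  · exact Set.Subset.antisymm hPsub.1 hsub2.1
  · funext r' x y
    exact propext ⟨fun h => hPsub.2 r' x y h, fun h => hsub2.2 r' x y h⟩

lemma compOf_not_trivial {a : V} (ha : a ∈ Γ.verts) {x : V} (hx : Γ.InSame r a x)
    (hout : Γ.HasOut r x) : ¬ (compOf Γ r a ha).Trivial := by
  obtain ⟨y, hy⟩ := hout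
  intro htriv
  exact htriv r x y ⟨rfl, hy, hx, hx.trans (InSame.of_edge hy)⟩

lemma compOf_closed_iff {a : V} (ha : a ∈ Γ.verts) :
    (compOf Γ r a ha).Closed ↔ Γ.ClassClosed r a := by
  constructor
  · intro h b hb
    obtain ⟨r', z, hz⟩ := h b hb
    exact ⟨z, hz.2.1⟩
  · intro h x hx
    obtain ⟨z, hz⟩ := h x hx
    exact ⟨r, z, rfl, hz, hx, hx.trans (InSame.of_edge hz)⟩

lemma compOf_isRPath {a : V} (ha : a ∈ Γ.verts) {x : V} (hx : Γ.InSame r a x)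
    (hout : Γ.HasOut r x) : (compOf Γ r a ha).IsRPath Γ r :=
  ⟨compOf_isComponent ha, compOf_not_trivial ha hx hout⟩

/-- the edges of a component biject with the sources that have an outgoing edge -/
lemma compOf_edgeCount (hadm : Γ.Admissible) {a : V} (ha : a ∈ Γ.verts) :
    (compOf Γ r a ha).edgeCount = Nat.card {x // Γ.InSame r a x ∧ Γ.HasOut r x} := by
  apply Nat.card_eq_of_bijective
    (f := fun e : {p : Fin s × V × V // (compOf Γ r a ha).E p.1 p.2.1 p.2.2} =>
      (⟨e.1.2.1, e.2.2.2.1, ⟨e.1.2.2, e.2.2.1⟩⟩ : {x // Γ.InSame r a x ∧ Γ.HasOut r x}))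
  constructor
  · rintro ⟨⟨r1, x1, y1⟩, hr1, he1, hx1, hy1⟩ ⟨⟨r2, x2, y2⟩, hr2, he2, hx2, hy2⟩ hEq
    have hx : x1 = x2 := congrArg Subtype.val hEq
    dsimp only at hr1 hr2 he1 he2
    subst hx
    have hy : y1 = y2 := hadm.1 r x1 y1 y2 he1 he2
    subst hy
    have hr : r1 = r2 := hr1.trans hr2.symm
    subst hr
    rfl
  · rintro ⟨x, hx, y, hy⟩
    exact ⟨⟨(r, x, y), rfl, hy, hx, hx.trans (InSame.of_edge hy)⟩, rfl⟩

lemma closed_class_edgeCount (hadm : Γ.Admissible) {a : V} (ha : a ∈ Γ.verts)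
    (hcl : Γ.ClassClosed r a) :
    (compOf Γ r a ha).edgeCount = Nat.card {x // Γ.InSame r a x} := by
  rw [compOf_edgeCount hadm ha]
  apply Nat.card_eq_of_bijective (f := fun x : {x // Γ.InSame r a x ∧ Γ.HasOut r x} =>
    (⟨x.1, x.2.1⟩ : {x // Γ.InSame r a x}))
  constructor
  · rintro ⟨x, hx⟩ ⟨y, hy⟩ hEq
    simpa using congrArg Subtype.val hEq
  · rintro ⟨x, hx⟩
    exact ⟨⟨x, hx, hcl x hx⟩, rfl⟩

lemma string_class_edgeCount (hadm : Γ.Admissible) {a : V} (ha : a ∈ Γ.verts)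
    (hnc : ¬ Γ.ClassClosed r a) :
    Nat.card {x // Γ.InSame r a x} = (compOf Γ r a ha).edgeCount + 1 := by
  classical
  haveI hfin : Finite {x // Γ.InSame r a x} := class_finite ha
  haveI : Finite {x // Γ.InSame r a x ∧ Γ.HasOut r x} :=
    Finite.of_injective (fun x => (⟨x.1, x.2.1⟩ : {x // Γ.InSame r a x}))
      (fun x y h => by simpa [Subtype.ext_iff, Subtype.mk.injEq] using h)
  rw [compOf_edgeCount hadm ha]
  have hex : ∃ b, Γ.InSame r a b ∧ ¬ Γ.HasOut r b := by
    by_contra h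
    push_neg at h
    exact hnc (fun b hb => h b hb)
  obtain ⟨w, hw, hwout⟩ := hex
  have e : {x // Γ.InSame r a x} ≃ {x // Γ.InSame r a x ∧ Γ.HasOut r x} ⊕ PUnit.{1} := by
    refine Equiv.ofBijective (fun x => if h : Γ.HasOut r x.1
      then Sum.inl ⟨x.1, x.2, h⟩ else Sum.inr PUnit.unit) ⟨?_, ?_⟩
    · rintro ⟨x, hx⟩ ⟨y, hy⟩ hEq
      by_cases h1 : Γ.HasOut r x <;> by_cases h2 : Γ.HasOut r y <;>
        simp only [h1, h2, dif_pos, dif_neg, not_false_iff, Sum.inl.injEq,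
          Subtype.mk.injEq, reduceCtorEq] at hEq
      · exact Subtype.ext hEq
      · exact Subtype.ext (outless_unique hadm (hx.symm.trans hy) h1 h2)
    · rintro (⟨x, hx, hout⟩ | u)
      · exact ⟨⟨x, hx⟩, by simp [hout]⟩
      · exact ⟨⟨w, hw⟩, by simp [hwout]⟩
  rw [Nat.card_congr e, Nat.card_sum]
  simp

/- ============ Section C : strongly admissible classes ============ -/

lemma closed_class_card_eq {d : Fin s → ℕ∞} (hSA : Γ.StronglyAdmissible d) {a : V}
    (ha : a ∈ Γ.verts) (hcl : Γ.ClassClosed r a) :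
    (Nat.card {x // Γ.InSame r a x} : ℕ∞) = d r := by
  have hout : Γ.HasOut r a := hcl a (InSame.refl a)
  have hpath := compOf_isRPath ha (InSame.refl a) hout
  have hl := (hSA.2 r _ hpath).1 ((compOf_closed_iff ha).2 hcl)
  rw [← hl, closed_class_edgeCount hSA.1 ha hcl]

lemma string_class_card_le {d : Fin s → ℕ∞} (hSA : Γ.StronglyAdmissible d) {a : V}
    (ha : a ∈ Γ.verts) (hnc : ¬ Γ.ClassClosed r a) {x : V} (hx : Γ.InSame r a x)
    (hout : Γ.HasOut r x) :
    (Nat.card {x // Γ.InSame r a x} : ℕ∞) ≤ d r := by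
  have hpath := compOf_isRPath ha hx hout
  have hlt := (hSA.2 r _ hpath).2 (fun hcl => hnc ((compOf_closed_iff ha).1 hcl))
  rw [string_class_edgeCount hSA.1 ha hnc]
  push_cast
  exact Order.add_one_le_of_lt hlt

/- ============ Section D : quotients ============ -/

lemma quot_mk_mem {π : Setoid V} {a : V} (ha : a ∈ Γ.verts) :
    Quotient.mk π a ∈ (Γ.quot π).verts := ⟨a, ha, rfl⟩

lemma quot_connected {π : Setoid V} (h : Γ.Connected) : (Γ.quot π).Connected := by
  have key : ∀ x y : V, Relation.ReflTransGen Γ.Adj x y →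
      Relation.ReflTransGen (Γ.quot π).Adj (Quotient.mk π x) (Quotient.mk π y) := by
    intro x y hxy
    induction hxy with
    | refl => exact Relation.ReflTransGen.refl
    | @tail b c _ hstep ih =>
        refine Relation.ReflTransGen.tail ih ?_
        obtain ⟨r, hstep⟩ := hstep
        rcases hstep with he | he
        · exact ⟨r, Or.inl ⟨b, c, he, rfl, rfl⟩⟩
        · exact ⟨r, Or.inr ⟨c, b, he, rfl, rfl⟩⟩
  rintro A ⟨a, ha, rfl⟩ B ⟨b, hb, rfl⟩
  exact key a b (h a ha b hb)

lemma quot_admissible {π : Setoid V} (hcong : Γ.IsCongruence π) :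
    (Γ.quot π).Admissible := by
  constructor
  · rintro r A B B' ⟨a, b, he, ha, hb⟩ ⟨a', b', he', ha', hb'⟩
    have h1 : π.r a a' := Quotient.eq.mp (ha.trans ha'.symm)
    have h2 : π.r b b' := (hcong r a b a' b' he he').mp h1
    rw [← hb, ← hb']
    exact Quotient.sound h2
  · rintro r A A' B ⟨a, b, he, ha, hb⟩ ⟨a', b', he', ha', hb'⟩
    have h1 : π.r b b' := Quotient.eq.mp (hb.trans hb'.symm)
    have h2 : π.r a a' := (hcong r a b a' b' he he').mpr h1
    rw [← ha, ← ha']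
    exact Quotient.sound h2

/-- the meet of two setoids -/
def meetSetoid (π ρ : Setoid V) : Setoid V :=
  ⟨fun a b => π.r a b ∧ ρ.r a b,
    ⟨fun a => ⟨π.iseqv.refl a, ρ.iseqv.refl a⟩,
     fun h => ⟨π.iseqv.symm h.1, ρ.iseqv.symm h.2⟩,
     fun h h' => ⟨π.iseqv.trans h.1 h'.1, ρ.iseqv.trans h.2 h'.2⟩⟩⟩

lemma meet_congruence {π ρ : Setoid V} (hπ : Γ.IsCongruence π) (hρ : Γ.IsCongruence ρ) :
    Γ.IsCongruence (meetSetoid π ρ) := by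
  intro r a1 b1 a2 b2 e1 e2
  exact ⟨fun h => ⟨(hπ r a1 b1 a2 b2 e1 e2).mp h.1, (hρ r a1 b1 a2 b2 e1 e2).mp h.2⟩,
    fun h => ⟨(hπ r a1 b1 a2 b2 e1 e2).mpr h.1, (hρ r a1 b1 a2 b2 e1 e2).mpr h.2⟩⟩

/-- the map `Γ/(π ⊓ ρ) → Γ/π` -/
def pmapQ (π ρ : Setoid V) : Quotient (meetSetoid π ρ) → Quotient π :=
  Quotient.lift (fun a => Quotient.mk π a) (fun _ _ h => Quotient.sound h.1)

/-- the map `Γ/(π ⊓ ρ) → Γ/ρ` -/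
def qmapQ (π ρ : Setoid V) : Quotient (meetSetoid π ρ) → Quotient ρ :=
  Quotient.lift (fun a => Quotient.mk ρ a) (fun _ _ h => Quotient.sound h.2)

lemma joint_inj {π ρ : Setoid V} {A B : Quotient (meetSetoid π ρ)}
    (hp : pmapQ π ρ A = pmapQ π ρ B) (hq : qmapQ π ρ A = qmapQ π ρ B) : A = B := by
  obtain ⟨a, rfl⟩ := Quotient.exists_rep A
  obtain ⟨b, rfl⟩ := Quotient.exists_rep B
  exact Quotient.sound ⟨Quotient.eq.mp hp, Quotient.eq.mp hq⟩

lemma pmapQ_edge {π ρ : Setoid V} {r : Fin s} {A B : Quotient (meetSetoid π ρ)}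
    (h : (Γ.quot (meetSetoid π ρ)).E r A B) :
    (Γ.quot π).E r (pmapQ π ρ A) (pmapQ π ρ B) := by
  obtain ⟨a, b, he, ha, hb⟩ := h
  exact ⟨a, b, he, by rw [← ha]; rfl, by rw [← hb]; rfl⟩

lemma qmapQ_edge {π ρ : Setoid V} {r : Fin s} {A B : Quotient (meetSetoid π ρ)}
    (h : (Γ.quot (meetSetoid π ρ)).E r A B) :
    (Γ.quot ρ).E r (qmapQ π ρ A) (qmapQ π ρ B) := by
  obtain ⟨a, b, he, ha, hb⟩ := h
  exact ⟨a, b, he, by rw [← ha]; rfl, by rw [← hb]; rfl⟩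

/- ============ Section E : the key class injectivity ============ -/

/-- On each `r`-class of `Γ/(π ⊓ ρ)`, the projection to `Γ/π` is injective. -/
lemma class_inj {d : Fin s → ℕ∞} {π ρ : Setoid V}
    (hπ : Γ.IsStrongCongruence d π) (hρ : Γ.IsStrongCongruence d ρ)
    {r : Fin s} {x y : Quotient (meetSetoid π ρ)}
    (hxy : (Γ.quot (meetSetoid π ρ)).InSame r x y)
    (hp : pmapQ π ρ x = pmapQ π ρ y) : x = y := by
  set μ := meetSetoid π ρ with hμ
  have hadmΘ : (Γ.quot μ).Admissible := quot_admissible (meet_congruence hπ.1 hρ.1)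
  have hadmΔ : (Γ.quot π).Admissible := hπ.2.1
  have hadmΔ' : (Γ.quot ρ).Admissible := hρ.2.1
  -- the general claim for directed chains
  have claim : ∀ (c : ℕ → Quotient μ) (k : ℕ), (Γ.quot μ).IsChainN r c k →
      pmapQ π ρ (c 0) = pmapQ π ρ (c k) → c k = c 0 := by
    intro c k hc hpc
    rcases Nat.eq_zero_or_pos k with rfl | hk
    · rfl
    · -- image chains
      have hPchain : (Γ.quot π).IsChainN r (fun i => pmapQ π ρ (c i)) k :=
        fun i hi => pmapQ_edge (hc i hi)
      have hQchain : (Γ.quot ρ).IsChainN r (fun i => qmapQ π ρ (c i)) k :=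
        fun i hi => qmapQ_edge (hc i hi)
      have hPcy : (fun i => pmapQ π ρ (c i)) k = (fun i => pmapQ π ρ (c i)) 0 := hpc.symm
      have hclP : (Γ.quot π).ClassClosed r (pmapQ π ρ (c 0)) := by
        have := classClosed_of_cycle hadmΔ (hPchain.mono_len le_rfl) hk hPcy
        simpa using this
      have hPverts : pmapQ π ρ (c 0) ∈ (Γ.quot π).verts :=
        (Γ.quot π).memL r _ _ (hPchain 0 hk)
      set nπ := Nat.card {z // (Γ.quot π).InSame r (pmapQ π ρ (c 0)) z} with hnπ
      have hcardπ : (nπ : ℕ∞) = d r := closed_class_card_eq hπ.2 hPverts hclP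
      obtain ⟨hdvdP, hwrapP⟩ := closed_class_facts hadmΔ hPverts hclP
      have hdvd : nπ ∣ k := hdvdP _ k hPchain rfl hPcy hk
      have hnπpos : 1 ≤ nπ := by
        rcases Nat.eq_zero_or_pos nπ with h0 | h
        · exfalso; rw [h0] at hdvd
          exact absurd (Nat.eq_zero_of_zero_dvd hdvd) (by omega)
        · exact h
      have hnπk : nπ ≤ k := Nat.le_of_dvd hk hdvd
      have hQ0verts : qmapQ π ρ (c 0) ∈ (Γ.quot ρ).verts :=
        (Γ.quot ρ).memL r _ _ (hQchain 0 hk)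
      have hQwrap : qmapQ π ρ (c nπ) = qmapQ π ρ (c 0) := by
        by_cases hQcl : (Γ.quot ρ).ClassClosed r (qmapQ π ρ (c 0))
        · have hcardρ : (Nat.card {z // (Γ.quot ρ).InSame r (qmapQ π ρ (c 0)) z} : ℕ∞) = d r :=
            closed_class_card_eq hρ.2 hQ0verts hQcl
          have hmn : Nat.card {z // (Γ.quot ρ).InSame r (qmapQ π ρ (c 0)) z} = nπ := by
            have h2 := hcardρ.trans hcardπ.symm
            exact_mod_cast h2
          obtain ⟨_, hwrapQ⟩ := closed_class_facts hadmΔ' hQ0verts hQcl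
          exact hwrapQ _ k nπ hQchain rfl (hmn ▸ dvd_refl _) hnπk
        · exfalso
          have hbound := not_closed_chain_card hadmΔ' hQchain hQcl hQ0verts
          have hle := string_class_card_le hρ.2 hQ0verts hQcl (InSame.refl _)
            ⟨_, hQchain 0 hk⟩
          rw [← hcardπ] at hle
          have hle' : Nat.card {z // (Γ.quot ρ).InSame r (qmapQ π ρ (c 0)) z} ≤ nπ := by
            exact_mod_cast hle
          omega
      have hPwrap : pmapQ π ρ (c nπ) = pmapQ π ρ (c 0) :=
        hwrapP _ k nπ hPchain rfl dvd_rfl hnπk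
      have hcwrap : c nπ = c 0 := joint_inj hPwrap hQwrap
      have hshift : ∀ i, i + nπ ≤ k → c (i + nπ) = c i := by
        intro i
        induction i with
        | zero => intro _; simpa using hcwrap
        | succ n ih =>
            intro hn
            have h1 : c (n + nπ) = c n := ih (by omega)
            have e1 := hc (n + nπ) (by omega)
            have e2 := hc n (by omega)
            have h2 := hadmΘ.1 r (c n) _ _ (h1 ▸ e1) e2
            rw [show n + nπ + 1 = n + 1 + nπ by omega] at h2
            exact h2
      have hmult : ∀ t, nπ * t ≤ k → c (nπ * t) = c 0 := by
        intro t
        induction t with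
        | zero => intro _; simp
        | succ n ih =>
            intro hn
            rw [Nat.mul_succ] at hn ⊢
            rw [hshift (nπ * n) hn, ih (by omega)]
      have hkd : nπ * (k / nπ) = k := Nat.mul_div_cancel' hdvd
      rw [← hkd]
      exact hmult (k / nπ) (by omega)
  rcases inSame_comparable hadmΘ hxy with ⟨c, k, hc, hc0, hck⟩ | ⟨c, k, hc, hc0, hck⟩
  · have := claim c k hc (by rw [hc0, hck]; exact hp)
    rw [← hc0, ← hck, this]
  · have := claim c k hc (by rw [hc0, hck]; exact hp.symm)
    rw [← hc0, ← hck, this]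

/- ============ Section F : generic simple-graph facts ============ -/

section SimpleGraphFacts

open SimpleGraph

variable {W : Type} [Finite W] {G : SimpleGraph W}

lemma isPath_getVert_inj {u v : W} {p : G.Walk u v} (hp : p.IsPath) :
    ∀ i j, i ≤ p.length → j ≤ p.length → p.getVert i = p.getVert j → i = j := by
  induction p with
  | nil =>
      intro i j hi hj _
      simp only [SimpleGraph.Walk.length_nil, Nat.le_zero] at hi hj
      omega
  | @cons a b c h q ih =>
      rw [SimpleGraph.Walk.cons_isPath_iff] at hp
      intro i j hi hj hEq
      simp only [SimpleGraph.Walk.length_cons] at hi hj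
      match i, j with
      | 0, 0 => rfl
      | 0, (m+1) =>
          exfalso
          rw [SimpleGraph.Walk.getVert_zero, SimpleGraph.Walk.getVert_cons_succ] at hEq
          exact hp.2 (SimpleGraph.Walk.mem_support_iff_exists_getVert.mpr
            ⟨m, hEq.symm, by omega⟩)
      | (m+1), 0 =>
          exfalso
          rw [SimpleGraph.Walk.getVert_zero, SimpleGraph.Walk.getVert_cons_succ] at hEq
          exact hp.2 (SimpleGraph.Walk.mem_support_iff_exists_getVert.mpr
            ⟨m, hEq, by omega⟩)
      | (m+1), (l+1) =>
          rw [SimpleGraph.Walk.getVert_cons_succ, SimpleGraph.Walk.getVert_cons_succ] at hEq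
          have := ih hp.1 m l (by omega) (by omega) hEq
          omega

lemma isPath_concat {u v w : W} {p : G.Walk u v} (hp : p.IsPath) (h : G.Adj v w)
    (hw : w ∉ p.support) : (p.concat h).IsPath := by
  rw [← SimpleGraph.Walk.isPath_reverse_iff, SimpleGraph.Walk.reverse_concat,
    SimpleGraph.Walk.cons_isPath_iff]
  exact ⟨(SimpleGraph.Walk.isPath_reverse_iff p).mpr hp,
    by rwa [SimpleGraph.Walk.support_reverse, List.mem_reverse]⟩

lemma connected_card_le (hc : G.Connected) :
    Nat.card W ≤ Nat.card G.edgeSet + 1 := by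
  haveI : Nonempty W := hc.nonempty
  set root := Classical.arbitrary W with hroot
  have key : ∀ v : W, v ≠ root → ∃ u, G.Adj v u ∧ G.dist root u + 1 ≤ G.dist root v := by
    intro v hv
    have hreach : G.Reachable root v := hc.preconnected root v
    have hdpos : 0 < G.dist root v := hc.pos_dist_of_ne (Ne.symm hv)
    obtain ⟨p, hp, hlen⟩ := hreach.exists_path_of_dist
    cases hrev : p.reverse with
    | nil =>
        exfalso
        have hzz := congrArg SimpleGraph.Walk.length hrev
        rw [SimpleGraph.Walk.length_reverse, SimpleGraph.Walk.length_nil] at hzz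
        omega
    | @cons _ u _ h t =>
        refine ⟨u, h, ?_⟩
        have h1 : G.dist root u ≤ t.reverse.length := SimpleGraph.dist_le _
        rw [SimpleGraph.Walk.length_reverse] at h1
        have h2 : p.reverse.length = p.length := SimpleGraph.Walk.length_reverse p
        rw [hrev] at h2
        simp only [SimpleGraph.Walk.length_cons] at h2
        omega
  choose f hf1 hf2 using key
  haveI : Finite ↥G.edgeSet := Subtype.finite
  have hinj : Function.Injective
      (fun v : {v : W // v ≠ root} => (⟨s(v.1, f v.1 v.2), (hf1 v.1 v.2)⟩ : G.edgeSet)) := by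
    rintro ⟨v, hv⟩ ⟨w, hw⟩ hEq
    have hEq' : s(v, f v hv) = s(w, f w hw) := congrArg Subtype.val hEq
    rw [Sym2.eq_iff] at hEq'
    rcases hEq' with ⟨h1, _⟩ | ⟨h1, h2⟩
    · exact Subtype.ext h1
    · exfalso
      have b1 := hf2 v hv
      have b2 := hf2 w hw
      rw [h2] at b1
      rw [← h1] at b2
      omega
  have hle : Nat.card {v : W // v ≠ root} ≤ Nat.card G.edgeSet :=
    Nat.card_le_card_of_injective _ hinj
  haveI : Unique {v : W // v = root} :=
    ⟨⟨⟨root, rfl⟩⟩, by rintro ⟨v, rfl⟩; rfl⟩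
  have hcount : Nat.card W = Nat.card {v : W // v = root} + Nat.card {v : W // ¬ v = root} := by
    classical
    rw [← Nat.card_sum]
    exact (Nat.card_congr (Equiv.sumCompl (· = root))).symm
  have h1 : Nat.card {v : W // v = root} = 1 := Nat.card_unique
  have h2 : Nat.card {v : W // v ≠ root} = Nat.card {v : W // ¬ v = root} := rfl
  omega

lemma acyclic_of_card (hc : G.Connected) (hcard : Nat.card W = Nat.card G.edgeSet + 1) :
    G.IsAcyclic := by
  classical
  by_contra hcyc
  unfold SimpleGraph.IsAcyclic at hcyc
  push_neg at hcyc
  obtain ⟨v, c, hcycle⟩ := hcyc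
  have hlen3 := hcycle.three_le_length
  have hne : c.edges ≠ [] := by
    intro h
    have := SimpleGraph.Walk.length_edges c
    rw [h] at this
    simp at this
    omega
  obtain ⟨e, he⟩ := List.exists_mem_of_ne_nil _ hne
  have heE : e ∈ G.edgeSet := SimpleGraph.Walk.edges_subset_edgeSet c he
  revert he heE
  induction e using Sym2.ind with
  | _ a b =>
  intro he heE
  have hab : G.Adj a b := heE
  have hreach : (G \ SimpleGraph.fromEdgeSet {s(a, b)}).Reachable a b :=
    ((SimpleGraph.adj_and_reachable_delete_edges_iff_exists_cycle).mpr ⟨v, c, hcycle, he⟩).2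
  set G' := G \ SimpleGraph.fromEdgeSet {s(a, b)} with hG'
  have hstep : ∀ x y : W, G.Adj x y → G'.Reachable x y := by
    intro x y hxy
    by_cases h : s(x, y) = s(a, b)
    · rw [Sym2.eq_iff] at h
      rcases h with ⟨rfl, rfl⟩ | ⟨rfl, rfl⟩
      · exact hreach
      · exact hreach.symm
    · refine SimpleGraph.Adj.reachable ?_
      rw [hG', SimpleGraph.sdiff_adj]
      refine ⟨hxy, ?_⟩
      rw [SimpleGraph.fromEdgeSet_adj]
      rintro ⟨hmem, -⟩
      exact h (by simpa using hmem)
  have htrans : ∀ x y : W, G.Reachable x y → G'.Reachable x y := by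
    intro x y hxy
    obtain ⟨w⟩ := hxy
    induction w with
    | nil => exact SimpleGraph.Reachable.refl _
    | cons h q ih => exact (hstep _ _ h).trans ih
  haveI : Nonempty W := hc.nonempty
  have hGconn' : G'.Connected := ⟨fun x y => htrans x y (hc.preconnected x y)⟩
  have hbound := connected_card_le hGconn'
  have hEcard : Nat.card ↥G'.edgeSet = Nat.card ↥G.edgeSet - 1 := by
    have hEeq : G'.edgeSet = G.edgeSet \ {s(a, b)} := by
      rw [hG', SimpleGraph.edgeSet_sdiff, SimpleGraph.edgeSet_fromEdgeSet]
      have : ({s(a, b)} : Set (Sym2 W)) \ {e | e.IsDiag} = {s(a, b)} := by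
        ext e
        simp only [Set.mem_diff, Set.mem_singleton_iff, Set.mem_setOf_eq,
          and_iff_left_iff_imp]
        rintro rfl
        simp [Sym2.mk_isDiag_iff]
        exact hab.ne
      rw [Sym2.diagSet, this]
    rw [hEeq, Nat.card_coe_set_eq, Nat.card_coe_set_eq,
      Set.ncard_diff_singleton_of_mem heE]
  have hpos : 0 < Nat.card ↥G.edgeSet := by
    haveI : Finite ↥G.edgeSet := Subtype.finite
    exact Nat.card_pos_iff.mpr ⟨⟨s(a, b), heE⟩, inferInstance⟩
  omega

lemma tree_adj_dist_ne (hc : G.Connected) (hac : G.IsAcyclic) (root : W) {u v : W}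
    (h : G.Adj u v) : G.dist root u ≠ G.dist root v := by
  classical
  intro hEq
  obtain ⟨p, hp, hlen⟩ := (hc.preconnected root u).exists_path_of_dist
  have hvsup : v ∉ p.support := by
    intro hv
    have h1 : G.dist root v ≤ (p.takeUntil v hv).length := SimpleGraph.dist_le _
    have h2 : (p.takeUntil v hv).length ≤ p.length := SimpleGraph.Walk.length_takeUntil_le p hv
    have h3 : (p.takeUntil v hv).length = p.length := by omega
    have h4 := congrArg SimpleGraph.Walk.length (p.take_spec hv)
    rw [SimpleGraph.Walk.length_append] at h4
    have h5 : (p.dropUntil v hv).length = 0 := by omega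
    exact (G.ne_of_adj h) (SimpleGraph.Walk.eq_of_length_eq_zero h5).symm
  have hpath2 := isPath_concat hp h hvsup
  obtain ⟨q, hq, hqlen⟩ := (hc.preconnected root v).exists_path_of_dist
  have hun := hac.path_unique ⟨q, hq⟩ ⟨p.concat h, hpath2⟩
  have hl : q.length = (p.concat h).length := by
    rw [show q = p.concat h from congrArg Subtype.val hun]
  rw [SimpleGraph.Walk.length_concat] at hl
  omega

lemma tree_parent_unique (hc : G.Connected) (hac : G.IsAcyclic) (root : W) {m u v : W}
    (hu : G.Adj u m) (hv : G.Adj v m)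
    (hdu : G.dist root u + 1 = G.dist root m) (hdv : G.dist root v + 1 = G.dist root m) :
    u = v := by
  classical
  obtain ⟨p, hp, hplen⟩ := (hc.preconnected root u).exists_path_of_dist
  obtain ⟨q, hq, hqlen⟩ := (hc.preconnected root v).exists_path_of_dist
  have hm1 : m ∉ p.support := by
    intro hm
    have h1 : G.dist root m ≤ (p.takeUntil m hm).length := SimpleGraph.dist_le _
    have h2 : (p.takeUntil m hm).length ≤ p.length := SimpleGraph.Walk.length_takeUntil_le p hm
    omega
  have hm2 : m ∉ q.support := by
    intro hm
    have h1 : G.dist root m ≤ (q.takeUntil m hm).length := SimpleGraph.dist_le _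
    have h2 : (q.takeUntil m hm).length ≤ q.length := SimpleGraph.Walk.length_takeUntil_le q hm
    omega
  have hp' := isPath_concat hp hu hm1
  have hq' := isPath_concat hq hv hm2
  have hun := hac.path_unique ⟨p.concat hu, hp'⟩ ⟨q.concat hv, hq'⟩
  have hweq : p.concat hu = q.concat hv := congrArg Subtype.val hun
  have h1 : (p.concat hu).reverse.getVert 1 = u := by
    rw [SimpleGraph.Walk.reverse_concat]
    rw [SimpleGraph.Walk.getVert_cons_succ, SimpleGraph.Walk.getVert_zero]
  have h2 : (q.concat hv).reverse.getVert 1 = v := by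
    rw [SimpleGraph.Walk.reverse_concat]
    rw [SimpleGraph.Walk.getVert_cons_succ, SimpleGraph.Walk.getVert_zero]
  rw [← h1, ← h2, hweq]

end SimpleGraphFacts

/- ============ Section G : the incidence graph of an admissible graph ============ -/

section BGraph

variable {U : Type}

/-- vertices of `Δ` as a type -/
abbrev VS (Δ : CGraph U s) := {A : U // A ∈ Δ.verts}

/-- the setoid of `r`-components -/
def SetoidR (Δ : CGraph U s) (r : Fin s) : Setoid (VS Δ) :=
  ⟨fun x y => Δ.InSame r x.1 y.1,
   ⟨fun _ => InSame.refl _, fun h => h.symm, fun h h' => h.trans h'⟩⟩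

/-- nodes of the incidence graph -/
abbrev NodeT (Δ : CGraph U s) := VS Δ ⊕ (Σ r : Fin s, Quotient (SetoidR Δ r))

def BAdj (Δ : CGraph U s) : NodeT Δ → NodeT Δ → Prop
  | Sum.inl x, Sum.inr p => Quotient.mk (SetoidR Δ p.1) x = p.2
  | Sum.inr p, Sum.inl x => Quotient.mk (SetoidR Δ p.1) x = p.2
  | _, _ => False

def BGraph (Δ : CGraph U s) : SimpleGraph (NodeT Δ) where
  Adj := BAdj Δ
  symm := by
    constructor
    rintro (x | p) (y | q) h
    · exact False.elim h
    · exact h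
    · exact h
    · exact False.elim h
  loopless := by
    constructor
    rintro (x | p) h
    · exact False.elim h
    · exact False.elim h

instance finVS (Δ : CGraph U s) : Finite (VS Δ) := Δ.finite.to_subtype

instance finNodeT (Δ : CGraph U s) : Finite (NodeT Δ) := by
  haveI : ∀ r : Fin s, Finite (Quotient (SetoidR Δ r)) := fun r => Quotient.finite _
  infer_instance

lemma BGraph_adj_inl_inr {Δ : CGraph U s} (x : VS Δ) (p : Σ r : Fin s, Quotient (SetoidR Δ r)) :
    (BGraph Δ).Adj (Sum.inl x) (Sum.inr p) ↔ Quotient.mk (SetoidR Δ p.1) x = p.2 := Iff.rfl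

lemma BGraph_connected {Δ : CGraph U s} (h : Δ.Connected) : (BGraph Δ).Connected := by
  have hinl : ∀ (a b : U) (ha : a ∈ Δ.verts) (hb : b ∈ Δ.verts),
      Relation.ReflTransGen Δ.Adj a b →
      (BGraph Δ).Reachable (Sum.inl ⟨a, ha⟩) (Sum.inl ⟨b, hb⟩) := by
    intro a b ha hb hab
    induction hab with
    | refl => exact SimpleGraph.Reachable.refl _
    | @tail b' b hab' hstep ih =>
        obtain ⟨r, hstep⟩ := hstep
        have hb' : b' ∈ Δ.verts := by
          rcases hstep with he | he
          · exact Δ.memL _ _ _ he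
          · exact Δ.memR _ _ _ he
        refine (ih hb').trans ?_
        have hin : Δ.InSame r b' b := by
          rcases hstep with he | he
          · exact InSame.of_edge he
          · exact (InSame.of_edge he).symm
        have h1 : (BGraph Δ).Adj (Sum.inl ⟨b', hb'⟩)
            (Sum.inr ⟨r, Quotient.mk (SetoidR Δ r) ⟨b', hb'⟩⟩) := rfl
        have h2 : (BGraph Δ).Adj (Sum.inr ⟨r, Quotient.mk (SetoidR Δ r) ⟨b', hb'⟩⟩)
            (Sum.inl ⟨b, hb⟩) := by
          show Quotient.mk (SetoidR Δ r) ⟨b, hb⟩ = Quotient.mk (SetoidR Δ r) ⟨b', hb'⟩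
          exact Quotient.sound hin.symm
        exact (h1.reachable).trans h2.reachable
  have hnonem : Nonempty (NodeT Δ) := ⟨Sum.inl ⟨Δ.nonem.some, Δ.nonem.some_mem⟩⟩
  refine ⟨?_⟩
  intro u v
  have hred : ∀ w : NodeT Δ, ∃ (a : U) (ha : a ∈ Δ.verts),
      (BGraph Δ).Reachable w (Sum.inl ⟨a, ha⟩) := by
    intro w
    match w with
    | Sum.inl x => exact ⟨x.1, x.2, SimpleGraph.Reachable.refl _⟩
    | Sum.inr ⟨r, c⟩ =>
        obtain ⟨x, rfl⟩ := Quotient.exists_rep c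
        exact ⟨x.1, x.2, SimpleGraph.Adj.reachable (by
          show Quotient.mk (SetoidR Δ r) ⟨x.1, x.2⟩ = Quotient.mk (SetoidR Δ r) x
          rfl)⟩
  obtain ⟨a, ha, hu⟩ := hred u
  obtain ⟨b, hb, hv⟩ := hred v
  exact hu.trans ((hinl a b ha hb (h a ha b hb)).trans hv.symm)

/-- edge count of the incidence graph -/
lemma BGraph_edge_card (Δ : CGraph U s) :
    Nat.card ((BGraph Δ).edgeSet) = Nat.card (Fin s × VS Δ) := by
  symm
  apply Nat.card_eq_of_bijective (f := fun q : Fin s × VS Δ =>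
    (⟨s(Sum.inl q.2, Sum.inr ⟨q.1, Quotient.mk (SetoidR Δ q.1) q.2⟩),
      by exact rfl⟩ : (BGraph Δ).edgeSet))
  constructor
  · rintro ⟨r1, x1⟩ ⟨r2, x2⟩ hEq
    have h1 := congrArg Subtype.val hEq
    rw [Sym2.eq_iff] at h1
    rcases h1 with ⟨ha, hb⟩ | ⟨ha, hb⟩
    · have hx : x1 = x2 := Sum.inl.inj ha
      have hr : r1 = r2 := congrArg Sigma.fst (Sum.inr.inj hb)
      subst hx; subst hr; rfl
    · exact absurd ha (by simp)
  · rintro ⟨e, heE⟩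
    revert heE
    induction e using Sym2.ind with
    | _ u v =>
    intro heE
    match u, v, heE with
    | Sum.inl x, Sum.inr p, heE =>
        refine ⟨(p.1, x), Subtype.ext ?_⟩
        have hp : (⟨p.1, Quotient.mk (SetoidR Δ p.1) x⟩ :
            Σ r : Fin s, Quotient (SetoidR Δ r)) = p := by
          have hx : Quotient.mk (SetoidR Δ p.1) x = p.2 := heE
          rw [hx]
        show s(Sum.inl x, Sum.inr ⟨p.1, Quotient.mk (SetoidR Δ p.1) x⟩) = s(Sum.inl x, Sum.inr p)
        rw [hp]
    | Sum.inr p, Sum.inl x, heE =>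
        refine ⟨(p.1, x), Subtype.ext ?_⟩
        have hp : (⟨p.1, Quotient.mk (SetoidR Δ p.1) x⟩ :
            Σ r : Fin s, Quotient (SetoidR Δ r)) = p := by
          have hx : Quotient.mk (SetoidR Δ p.1) x = p.2 := heE
          rw [hx]
        show s(Sum.inl x, Sum.inr ⟨p.1, Quotient.mk (SetoidR Δ p.1) x⟩) = s(Sum.inr p, Sum.inl x)
        rw [hp, Sym2.eq_swap]

end BGraph

/- ============ Section H : counting for the incidence graph ============ -/

section Counting

variable {U : Type}

lemma card_split {α : Type} [Finite α] (p : α → Prop) :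
    Nat.card α = Nat.card {x // p x} + Nat.card {x // ¬ p x} := by
  classical
  rw [← Nat.card_sum]
  exact (Nat.card_congr (Equiv.sumCompl p)).symm

lemma compOf_congr {Δ : CGraph U s} {r : Fin s} {a b : U} (ha : a ∈ Δ.verts)
    (hb : b ∈ Δ.verts) (h : Δ.InSame r a b) : compOf Δ r a ha = compOf Δ r b hb := by
  refine ext_graph (inSame_class_eq h) ?_
  funext r' x y
  apply propext
  constructor
  · rintro ⟨hr, he, hx, hy⟩; exact ⟨hr, he, h.symm.trans hx, h.symm.trans hy⟩
  · rintro ⟨hr, he, hx, hy⟩; exact ⟨hr, he, h.trans hx, h.trans hy⟩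

def ClosedQ (Δ : CGraph U s) (r : Fin s) : Quotient (SetoidR Δ r) → Prop :=
  Quotient.lift (fun x : VS Δ => Δ.ClassClosed r x.1)
    (fun _ _ h => propext ⟨ClassClosed.of_inSame h, ClassClosed.of_inSame (InSame.symm h)⟩)

lemma card_nonclosed (Δ : CGraph U s) (hadm : Δ.Admissible) (r : Fin s) :
    Nat.card {c : Quotient (SetoidR Δ r) // ¬ ClosedQ Δ r c} =
      Nat.card {x : VS Δ // ¬ Δ.HasOut r x.1} := by
  symm
  apply Nat.card_eq_of_bijective (f := fun x : {x : VS Δ // ¬ Δ.HasOut r x.1} =>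
    (⟨Quotient.mk (SetoidR Δ r) x.1,
      fun hcl => x.2 ((hcl : Δ.ClassClosed r x.1.1) x.1.1 (InSame.refl _))⟩ :
      {c // ¬ ClosedQ Δ r c}))
  constructor
  · rintro ⟨x, hx⟩ ⟨y, hy⟩ hEq
    have h1 : Quotient.mk (SetoidR Δ r) x = Quotient.mk (SetoidR Δ r) y :=
      congrArg Subtype.val hEq
    have h2 : Δ.InSame r x.1 y.1 := Quotient.exact h1
    exact Subtype.ext (Subtype.ext (outless_unique hadm h2 hx hy))
  · rintro ⟨c, hc⟩
    obtain ⟨x, rfl⟩ := Quotient.exists_rep c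
    have hc' : ¬ Δ.ClassClosed r x.1 := hc
    rw [ClassClosed] at hc'
    push_neg at hc'
    obtain ⟨b, hb, hbout⟩ := hc'
    refine ⟨⟨⟨b, InSame.mem_verts x.2 hb⟩, hbout⟩, ?_⟩
    exact Subtype.ext (Quotient.sound (show Δ.InSame r b x.1 from hb.symm))

/-- base point of a loop -/
noncomputable def loopBase {Δ : CGraph U s} {r : Fin s} (P : CGraph U s)
    (hP : P.IsRPath Δ r ∧ P.Closed) : VS Δ :=
  ⟨P.nonem.some, hP.1.1.1.1 P.nonem.some_mem⟩

lemma loop_eq_compOf {Δ : CGraph U s} {r : Fin s} (P : CGraph U s)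
    (hP : P.IsRPath Δ r ∧ P.Closed) :
    P = compOf Δ r (loopBase P hP).1 (loopBase P hP).2 :=
  isComponent_eq_compOf hP.1.1 P.nonem.some_mem _

lemma card_closed (Δ : CGraph U s) (r : Fin s) :
    Nat.card {c : Quotient (SetoidR Δ r) // ClosedQ Δ r c} =
      Nat.card {P : CGraph U s // P.IsRPath Δ r ∧ P.Closed} := by
  symm
  apply Nat.card_eq_of_bijective (f := fun Q : {P : CGraph U s // P.IsRPath Δ r ∧ P.Closed} =>
    (⟨Quotient.mk (SetoidR Δ r) (loopBase Q.1 Q.2),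
      show Δ.ClassClosed r (loopBase Q.1 Q.2).1 from
        (compOf_closed_iff (loopBase Q.1 Q.2).2).1 (loop_eq_compOf Q.1 Q.2 ▸ Q.2.2)⟩ :
      {c // ClosedQ Δ r c}))
  constructor
  · rintro ⟨P1, h1⟩ ⟨P2, h2⟩ hEq
    have hq : Quotient.mk (SetoidR Δ r) (loopBase P1 h1) = Quotient.mk (SetoidR Δ r) (loopBase P2 h2) :=
      congrArg Subtype.val hEq
    have hin : Δ.InSame r (loopBase P1 h1).1 (loopBase P2 h2).1 := Quotient.exact hq
    apply Subtype.ext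
    show P1 = P2
    rw [loop_eq_compOf P1 h1, loop_eq_compOf P2 h2]
    exact compOf_congr _ _ hin
  · rintro ⟨c, hcl⟩
    obtain ⟨x, rfl⟩ := Quotient.exists_rep c
    have hclx : Δ.ClassClosed r x.1 := hcl
    have hout : Δ.HasOut r x.1 := hclx x.1 (InSame.refl _)
    refine ⟨⟨compOf Δ r x.1 x.2, compOf_isRPath x.2 (InSame.refl _) hout,
      (compOf_closed_iff x.2).2 hclx⟩, ?_⟩
    apply Subtype.ext
    refine Quotient.sound (show Δ.InSame r _ x.1 from ?_)
    have hmem : (loopBase (compOf Δ r x.1 x.2)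
        ⟨compOf_isRPath x.2 (InSame.refl _) hout, (compOf_closed_iff x.2).2 hclx⟩).1
        ∈ {z | Δ.InSame r x.1 z} := (compOf Δ r x.1 x.2).nonem.some_mem
    exact (hmem : Δ.InSame r x.1 _).symm

lemma loops_finite (Δ : CGraph U s) (r : Fin s) :
    Finite {P : CGraph U s // P.IsRPath Δ r ∧ P.Closed} := by
  apply Finite.of_injective (f := fun Q : {P : CGraph U s // P.IsRPath Δ r ∧ P.Closed} =>
    loopBase Q.1 Q.2)
  rintro ⟨P1, h1⟩ ⟨P2, h2⟩ hEq
  apply Subtype.ext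
  show P1 = P2
  have hEq' : loopBase P1 h1 = loopBase P2 h2 := hEq
  rw [loop_eq_compOf P1 h1, loop_eq_compOf P2 h2]
  exact hEq' ▸ compOf_congr _ _ (InSame.refl _)

lemma extract_color {Δ : CGraph U s} {r : Fin s} {P : CGraph U s} (hP : P.IsRPath Δ r)
    {r' : Fin s} {a b : U} (he : P.E r' a b) : r' = r :=
  (hP.1.1.2 r' a b he).1

lemma loopCount_eq (Δ : CGraph U s) :
    Δ.loopCount = ∑ r : Fin s, Nat.card {P : CGraph U s // P.IsRPath Δ r ∧ P.Closed} := by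
  classical
  haveI : ∀ r : Fin s, Finite {P : CGraph U s // P.IsRPath Δ r ∧ P.Closed} :=
    fun r => loops_finite Δ r
  haveI : ∀ r : Fin s, Fintype {P : CGraph U s // P.IsRPath Δ r ∧ P.Closed} :=
    fun r => Fintype.ofFinite _
  have hbij : Function.Bijective
      (fun q : Σ r : Fin s, {P : CGraph U s // P.IsRPath Δ r ∧ P.Closed} =>
        (⟨q.2.1, ⟨q.1, q.2.2.1⟩, q.2.2.2⟩ : {P : CGraph U s // P.IsLoopOf Δ})) := by
    constructor
    · rintro ⟨r1, P1, hP1, hc1⟩ ⟨r2, P2, hP2, hc2⟩ hEq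
      have hP : P1 = P2 := congrArg Subtype.val hEq
      subst hP
      have hr : r1 = r2 := by
        have hT := hP1.2
        rw [Trivial] at hT
        push_neg at hT
        obtain ⟨r'', a, b, he⟩ := hT
        rw [← extract_color hP1 he, ← extract_color hP2 he]
      subst hr
      rfl
    · rintro ⟨P, ⟨r, hp⟩, hcl⟩
      exact ⟨⟨r, P, hp, hcl⟩, rfl⟩
  unfold loopCount
  rw [← Nat.card_eq_of_bijective _ hbij]
  rw [Nat.card_eq_fintype_card, Fintype.card_sigma]
  exact Finset.sum_congr rfl (fun r _ => (Nat.card_eq_fintype_card).symm)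

lemma edgeCount_eq (Δ : CGraph U s) (hadm : Δ.Admissible) :
    Δ.edgeCount = ∑ r : Fin s, Nat.card {x : VS Δ // Δ.HasOut r x.1} := by
  classical
  haveI : ∀ r : Fin s, Fintype {x : VS Δ // Δ.HasOut r x.1} := fun r => Fintype.ofFinite _
  have hbij : Function.Bijective
      (fun e : {p : Fin s × U × U // Δ.E p.1 p.2.1 p.2.2} =>
        (⟨e.1.1, ⟨⟨e.1.2.1, Δ.memL _ _ _ e.2⟩, ⟨e.1.2.2, e.2⟩⟩⟩ :
          Σ r : Fin s, {x : VS Δ // Δ.HasOut r x.1})) := by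
    constructor
    · rintro ⟨⟨r1, a1, b1⟩, h1⟩ ⟨⟨r2, a2, b2⟩, h2⟩ hEq
      have hr : r1 = r2 := congrArg Sigma.fst hEq
      subst hr
      have h2' := (Sigma.mk.inj_iff.mp hEq).2
      have hxx := eq_of_heq h2'
      have ha : a1 = a2 := congrArg (fun z => z.1.1) hxx
      subst ha
      have hb : b1 = b2 := hadm.1 r1 a1 b1 b2 h1 h2
      subst hb
      rfl
    · rintro ⟨r, x, b, hb⟩
      exact ⟨⟨(r, x.1, b), hb⟩, congrArg (Sigma.mk r) (Subtype.ext (Subtype.ext rfl))⟩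
  unfold edgeCount
  rw [Nat.card_eq_of_bijective _ hbij]
  rw [Nat.card_eq_fintype_card, Fintype.card_sigma]
  exact Finset.sum_congr rfl (fun r _ => (Nat.card_eq_fintype_card).symm)

end Counting

/- ============ Section I : the incidence graph is a tree ============ -/

lemma BGraph_card {U : Type} (Δ : CGraph U s) (hadm : Δ.Admissible) (hχ : Δ.chi = 1) :
    Nat.card (NodeT Δ) = Nat.card ((BGraph Δ).edgeSet) + 1 := by
  classical
  haveI : ∀ r : Fin s, Finite (Quotient (SetoidR Δ r)) := fun r => Quotient.finite _
  have hnode : Nat.card (NodeT Δ) =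
      Nat.card (VS Δ) + ∑ r : Fin s, Nat.card (Quotient (SetoidR Δ r)) := by
    rw [Nat.card_sum]
    congr 1
    haveI : ∀ r : Fin s, Fintype (Quotient (SetoidR Δ r)) := fun r => Fintype.ofFinite _
    rw [Nat.card_eq_fintype_card, Fintype.card_sigma]
    exact Finset.sum_congr rfl fun r _ => (Nat.card_eq_fintype_card).symm
  have hquot : ∀ r : Fin s, Nat.card (Quotient (SetoidR Δ r)) =
      Nat.card {P : CGraph U s // P.IsRPath Δ r ∧ P.Closed} +
        Nat.card {x : VS Δ // ¬ Δ.HasOut r x.1} := fun r => by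
    rw [card_split (ClosedQ Δ r), card_closed, card_nonclosed Δ hadm]
  have hsplit : ∀ r : Fin s, Nat.card (VS Δ) =
      Nat.card {x : VS Δ // Δ.HasOut r x.1} + Nat.card {x : VS Δ // ¬ Δ.HasOut r x.1} :=
    fun r => card_split _
  have hedge : Nat.card ((BGraph Δ).edgeSet) = s * Nat.card (VS Δ) := by
    rw [BGraph_edge_card, Nat.card_prod, Nat.card_eq_fintype_card (α := Fin s),
      Fintype.card_fin]
  have hVS : ∑ _r : Fin s, Nat.card (VS Δ) = s * Nat.card (VS Δ) := by
    rw [Finset.sum_const, Finset.card_univ, Fintype.card_fin, smul_eq_mul]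
  have h1 : ∑ r : Fin s, Nat.card (Quotient (SetoidR Δ r)) =
      Δ.loopCount + ∑ r : Fin s, Nat.card {x : VS Δ // ¬ Δ.HasOut r x.1} := by
    rw [loopCount_eq, ← Finset.sum_add_distrib]
    exact Finset.sum_congr rfl fun r _ => hquot r
  have h2 : s * Nat.card (VS Δ) =
      Δ.edgeCount + ∑ r : Fin s, Nat.card {x : VS Δ // ¬ Δ.HasOut r x.1} := by
    rw [edgeCount_eq Δ hadm, ← Finset.sum_add_distrib, ← hVS]
    exact Finset.sum_congr rfl fun r _ => hsplit r
  have hVEL : Δ.vertCount + Δ.loopCount = Δ.edgeCount + 1 := by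
    unfold chi at hχ
    omega
  have hvc : Δ.vertCount = Nat.card (VS Δ) := rfl
  set T := s * Nat.card (VS Δ) with hT
  omega

/- ============ Section J : main injectivity ============ -/

lemma pmapQ_mem {Γ : CGraph V s} {π ρ : Setoid V} {A : Quotient (meetSetoid π ρ)}
    (hA : A ∈ (Γ.quot (meetSetoid π ρ)).verts) : pmapQ π ρ A ∈ (Γ.quot π).verts := by
  obtain ⟨a, ha, rfl⟩ := hA
  exact ⟨a, ha, rfl⟩

lemma pmapQ_inSame {Γ : CGraph V s} {π ρ : Setoid V} {r : Fin s}
    {A B : Quotient (meetSetoid π ρ)} (h : (Γ.quot (meetSetoid π ρ)).InSame r A B) :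
    (Γ.quot π).InSame r (pmapQ π ρ A) (pmapQ π ρ B) := by
  induction h with
  | refl => exact InSame.refl _
  | tail _ hstep ih =>
      refine ih.trans ?_
      rcases hstep with he | he
      · exact InSame.of_edge (pmapQ_edge he)
      · exact (InSame.of_edge (pmapQ_edge he)).symm

/-- the induced map on incidence graphs -/
def Fmap (Γ : CGraph V s) (π ρ : Setoid V) :
    NodeT (Γ.quot (meetSetoid π ρ)) → NodeT (Γ.quot π) := fun u =>
  match u with
  | Sum.inl x => Sum.inl ⟨pmapQ π ρ x.1, pmapQ_mem x.2⟩
  | Sum.inr p => Sum.inr ⟨p.1, Quotient.map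
      (fun x : VS (Γ.quot (meetSetoid π ρ)) =>
        (⟨pmapQ π ρ x.1, pmapQ_mem x.2⟩ : VS (Γ.quot π)))
      (fun _ _ h => pmapQ_inSame h) p.2⟩

lemma main_inj {d : Fin s → ℕ∞} {Γ : CGraph V s} (hconn : Γ.Connected) {π ρ : Setoid V}
    (hπ : Γ.IsStrongCongruence d π) (hρ : Γ.IsStrongCongruence d ρ)
    (hχπ : (Γ.quot π).chi = 1) :
    ∀ x y : Quotient (meetSetoid π ρ), x ∈ (Γ.quot (meetSetoid π ρ)).verts →
      y ∈ (Γ.quot (meetSetoid π ρ)).verts → pmapQ π ρ x = pmapQ π ρ y → x = y := by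
  classical
  set μ := meetSetoid π ρ with hμdef
  set Θ := Γ.quot μ with hΘdef
  set Δ := Γ.quot π with hΔdef
  set F := Fmap Γ π ρ with hFdef
  have hFadj : ∀ u v : NodeT Θ, (BGraph Θ).Adj u v → (BGraph Δ).Adj (F u) (F v) := by
    rintro (x | ⟨r, c⟩) (y | ⟨r', c'⟩) h
    · exact False.elim h
    · show Quotient.mk (SetoidR Δ r') ⟨pmapQ π ρ x.1, pmapQ_mem x.2⟩ = _
      have h' : Quotient.mk (SetoidR Θ r') x = c' := h
      rw [← h']
      rfl
    · show Quotient.mk (SetoidR Δ r) ⟨pmapQ π ρ y.1, pmapQ_mem y.2⟩ = _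
      have h' : Quotient.mk (SetoidR Θ r) y = c := h
      rw [← h']
      rfl
    · exact False.elim h
  have hlocal : ∀ (m u v : NodeT Θ), (BGraph Θ).Adj u m → (BGraph Θ).Adj v m →
      F u = F v → u = v := by
    rintro (A | ⟨r, c⟩) (u | ⟨r1, c1⟩) (v | ⟨r2, c2⟩) h1 h2 hEq
    · exact False.elim h1
    · exact False.elim h1
    · exact False.elim h2
    · have hh1 : Quotient.mk (SetoidR Θ r1) A = c1 := h1
      have hh2 : Quotient.mk (SetoidR Θ r2) A = c2 := h2
      injection hEq with hEq'
      have hr : r1 = r2 := congrArg Sigma.fst hEq'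
      subst hr
      rw [← hh1, ← hh2]
    · have hh1 : Quotient.mk (SetoidR Θ r) u = c := h1
      have hh2 : Quotient.mk (SetoidR Θ r) v = c := h2
      have hin : Θ.InSame r u.1 v.1 := Quotient.exact (hh1.trans hh2.symm)
      injection hEq with hEq'
      have hpq : pmapQ π ρ u.1 = pmapQ π ρ v.1 := congrArg Subtype.val hEq'
      exact congrArg Sum.inl (Subtype.ext (class_inj hπ hρ hin hpq))
    · injection hEq
    · injection hEq
    · exact False.elim h1
  intro x y hx hy hp
  by_contra hne
  have hBΘconn : (BGraph Θ).Connected := BGraph_connected (quot_connected hconn)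
  have hBΔconn : (BGraph Δ).Connected := BGraph_connected (quot_connected hconn)
  have hacyc : (BGraph Δ).IsAcyclic :=
    acyclic_of_card hBΔconn (BGraph_card Δ hπ.2.1 hχπ)
  set ux : NodeT Θ := Sum.inl ⟨x, hx⟩ with hux
  set uy : NodeT Θ := Sum.inl ⟨y, hy⟩ with huy
  obtain ⟨w⟩ := hBΘconn.preconnected ux uy
  set p := w.bypass with hpdef
  have hppath : p.IsPath := SimpleGraph.Walk.bypass_isPath w
  set n := p.length with hn
  have hFuy : F uy = F ux := by
    show Sum.inl _ = Sum.inl _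
    exact congrArg Sum.inl (Subtype.ext hp.symm)
  have hn0 : n ≠ 0 := by
    intro h0
    have hxy : ux = uy := SimpleGraph.Walk.eq_of_length_eq_zero h0
    exact hne (congrArg Subtype.val (Sum.inl.inj hxy))
  have hn1 : n ≠ 1 := by
    intro h1
    have hadj := p.adj_getVert_succ (i := 0) (by omega)
    rw [p.getVert_zero] at hadj
    have hlast : p.getVert (0 + 1) = uy := by
      rw [show (0 + 1 : ℕ) = n from by omega]
      exact p.getVert_length
    rw [hlast] at hadj
    exact False.elim hadj
  set φ : ℕ → ℕ := fun i => (BGraph Δ).dist (F ux) (F (p.getVert i)) with hφ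
  have hφ0 : φ 0 = 0 := by
    show (BGraph Δ).dist (F ux) (F (p.getVert 0)) = 0
    rw [p.getVert_zero]
    exact SimpleGraph.dist_self
  have hφn : φ n = 0 := by
    show (BGraph Δ).dist (F ux) (F (p.getVert n)) = 0
    rw [p.getVert_length, hFuy]
    exact SimpleGraph.dist_self
  have hstepadj : ∀ i, i < n → (BGraph Δ).Adj (F (p.getVert i)) (F (p.getVert (i + 1))) :=
    fun i hi => hFadj _ _ (p.adj_getVert_succ hi)
  have hnediff : ∀ i, i < n → φ i ≠ φ (i + 1) :=
    fun i hi => tree_adj_dist_ne hBΔconn hacyc (F ux) (hstepadj i hi)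
  have hub : ∀ i, i < n → φ (i + 1) ≤ φ i + 1 ∧ φ i ≤ φ (i + 1) + 1 := by
    intro i hi
    have hadj := hstepadj i hi
    have hd1 : (BGraph Δ).dist (F (p.getVert i)) (F (p.getVert (i + 1))) = 1 :=
      SimpleGraph.dist_eq_one_iff_adj.mpr hadj
    have ht1 := hBΔconn.dist_triangle (u := F ux) (v := F (p.getVert i))
      (w := F (p.getVert (i + 1)))
    have ht2 := hBΔconn.dist_triangle (u := F ux) (v := F (p.getVert (i + 1)))
      (w := F (p.getVert i))
    rw [hd1] at ht1
    rw [SimpleGraph.dist_comm] at hd1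
    rw [hd1] at ht2
    exact ⟨ht1, ht2⟩
  have hφ1 : φ 1 = 1 := by
    have hadj := hstepadj 0 (by omega)
    rw [p.getVert_zero] at hadj
    exact SimpleGraph.dist_eq_one_iff_adj.mpr hadj
  obtain ⟨j, hjmem, hjmax⟩ := Finset.exists_max_image (Finset.range (n + 1)) φ
    ⟨0, by simp⟩
  have hj1 : 1 ≤ φ j := by
    have := hjmax 1 (Finset.mem_range.mpr (by omega))
    omega
  have hjlt : j < n ∧ 1 ≤ j := by
    have hjr := Finset.mem_range.mp hjmem
    constructor
    · rcases Nat.lt_or_ge j n with h | h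
      · exact h
      · exfalso; have : j = n := by omega
        rw [this, hφn] at hj1; omega
    · rcases Nat.eq_zero_or_pos j with h | h
      · exfalso; rw [h, hφ0] at hj1; omega
      · exact h
  have hprev : φ (j - 1) + 1 = φ j := by
    have h1 := hnediff (j - 1) (by omega)
    have h2 := hub (j - 1) (by omega)
    rw [show j - 1 + 1 = j by omega] at h1 h2
    have h4 := hjmax (j - 1) (Finset.mem_range.mpr (by omega))
    omega
  have hnext : φ (j + 1) + 1 = φ j := by
    have h1 := hnediff j hjlt.1
    have h2 := hub j hjlt.1
    have h4 := hjmax (j + 1) (Finset.mem_range.mpr (by omega))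
    omega
  have hadjprev : (BGraph Δ).Adj (F (p.getVert (j - 1))) (F (p.getVert j)) := by
    have := hstepadj (j - 1) (by omega)
    rwa [show j - 1 + 1 = j by omega] at this
  have hpar : F (p.getVert (j - 1)) = F (p.getVert (j + 1)) :=
    tree_parent_unique hBΔconn hacyc (F ux) hadjprev ((hstepadj j hjlt.1).symm)
      hprev hnext
  have hvert : p.getVert (j - 1) = p.getVert (j + 1) := by
    refine hlocal (p.getVert j) _ _ ?_ ?_ hpar
    · have := p.adj_getVert_succ (i := j - 1) (show j - 1 < n by omega)
      rwa [show j - 1 + 1 = j by omega] at this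
    · exact (p.adj_getVert_succ hjlt.1).symm
  have := isPath_getVert_inj hppath (j - 1) (j + 1) (by omega) (by omega) hvert
  omega
end CGraph

/-- For every connected graph `Γ` there is at most one strong congruence `π` of `Γ`
with `χ(Γ/π) = 1`: any two such induce the same partition of the vertex set. -/
theorem strong_congruence_chi_one_unique {V : Type} {s : ℕ}
    (hs : 0 < s) (d : Fin s → ℕ∞) (hd : ∀ r, 1 ≤ d r)
    (Γ : CGraph V s) (hconn : Γ.Connected)
    (π ρ : Setoid V)
    (hπ : Γ.IsStrongCongruence d π) (hρ : Γ.IsStrongCongruence d ρ)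
    (hχπ : (Γ.quot π).chi = 1) (hχρ : (Γ.quot ρ).chi = 1) :
    ∀ a ∈ Γ.verts, ∀ b ∈ Γ.verts, (π.r a b ↔ ρ.r a b) := by
  intro a ha b hb
  constructor
  · intro hab
    have hinj := CGraph.main_inj hconn hπ hρ hχπ
    have h1 : CGraph.pmapQ π ρ (Quotient.mk (CGraph.meetSetoid π ρ) a) =
        CGraph.pmapQ π ρ (Quotient.mk (CGraph.meetSetoid π ρ) b) := Quotient.sound hab
    have h2 := hinj _ _ (CGraph.quot_mk_mem ha) (CGraph.quot_mk_mem hb) h1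
    exact (Quotient.exact h2).2
  · intro hab
    have hinj := CGraph.main_inj hconn hρ hπ hχρ
    have h1 : CGraph.pmapQ ρ π (Quotient.mk (CGraph.meetSetoid ρ π) a) =
        CGraph.pmapQ ρ π (Quotient.mk (CGraph.meetSetoid ρ π) b) := Quotient.sound hab
    have h2 := hinj _ _ (CGraph.quot_mk_mem ha) (CGraph.quot_mk_mem hb) h1
    exact (Quotient.exact h2).2
end
end

section
/- Let x be any word of the form g_r g_r^*, g_r^* g_r (for some r∈[s]), or g_r^{d_r}, (g_r^*)^{d_r} (for some r∈[s] with d_r < ∞). Then the word-graph Γ_x has exactly one strong congruence π with χ(Γ_x/π) = 1. -/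
noncomputable section

open Filter Topology

/-- The next vertex (cyclically) in `Fin n`. -/
def nxt {n : ℕ} (k : Fin n) : Fin n := ⟨(k.1 + 1) % n, Nat.mod_lt _ k.pos⟩

/-- The word-graph of a non-empty word `w` in the letters `g_r` (encoded `(r, true)`)
and `g_r^*` (encoded `(r, false)`): vertex set `{1,…,n}` (as `Fin w.length`), and for
each position `k` one edge of color `r_k`, going `k ← k+1` for `g_r` and `k → k+1`
for `g_r^*` (cyclically). -/
def wordGraph {s : ℕ} (w : List (Fin s × Bool)) (hw : w ≠ []) :
    CGraph (Fin w.length) s where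
  verts := Set.univ
  finite := Set.finite_univ
  nonem := ⟨⟨0, List.length_pos_iff.mpr hw⟩, Set.mem_univ _⟩
  E := fun r a b => ∃ k : Fin w.length,
    (w.get k = (r, true) ∧ a = nxt k ∧ b = k) ∨
    (w.get k = (r, false) ∧ a = k ∧ b = nxt k)
  memL := fun _ _ _ _ => Set.mem_univ _
  memR := fun _ _ _ _ => Set.mem_univ _

/-- `x` is one of the words `g_r g_r^*`, `g_r^* g_r` (any `r`), or `g_r^{d_r}`,
`(g_r^*)^{d_r}` (any `r` with `d r < ∞`). -/
def IsSpecialWord (s : ℕ) (d : Fin s → ℕ∞) (x : List (Fin s × Bool)) : Prop :=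
  ∃ r : Fin s,
    x = [(r, true), (r, false)] ∨ x = [(r, false), (r, true)] ∨
      ∃ m : ℕ, d r = (m : ℕ∞) ∧
        (x = List.replicate m (r, true) ∨ x = List.replicate m (r, false))

/-- The number of strong congruences `π` of `Γ` with `χ(Γ/π) = 1`. -/
def sconCount {s : ℕ} (d : Fin s → ℕ∞) {V : Type} (Γ : CGraph V s) : ℕ :=
  Nat.card {π : Setoid V // Γ.IsStrongCongruence d π ∧ (Γ.quot π).chi = 1}

section Aux

open CGraph

variable {V : Type} {s : ℕ}

private lemma cgraph_ext {Γ₁ Γ₂ : CGraph V s} (hv : Γ₁.verts = Γ₂.verts)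
    (he : Γ₁.E = Γ₂.E) : Γ₁ = Γ₂ := by
  obtain ⟨v₁, f₁, n₁, E₁, l₁, m₁⟩ := Γ₁
  obtain ⟨v₂, f₂, n₂, E₂, l₂, m₂⟩ := Γ₂
  simp only at hv he
  subst hv; subst he
  rfl

private lemma setoid_ext' {π₁ π₂ : Setoid V} (h : ∀ a b, π₁.r a b ↔ π₂.r a b) :
    π₁ = π₂ := by
  obtain ⟨r₁, i₁⟩ := π₁
  obtain ⟨r₂, i₂⟩ := π₂
  simp only at h
  have : r₁ = r₂ := by funext a b; exact propext (h a b)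
  subst this
  rfl

private lemma subgraph_refl (Γ : CGraph V s) : Γ.Subgraph Γ :=
  ⟨subset_rfl, fun _ _ _ h => h⟩

/-- A graph all of whose edges have color `r`, which is connected and has an edge. -/
structure Good (Γ : CGraph V s) (r : Fin s) : Prop where
  color : ∀ r' a b, Γ.E r' a b → r' = r
  conn : Γ.Connected
  edge : ∃ a b, Γ.E r a b

variable {Γ P : CGraph V s} {r : Fin s} {d : Fin s → ℕ∞}

lemma Good.adj_mono (hg : Good Γ r) : (Γ.mono r).Adj = Γ.Adj := by
  funext a b
  refine propext ⟨?_, ?_⟩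
  · rintro ⟨r', h | h⟩
    exacts [⟨r', Or.inl h.2⟩, ⟨r', Or.inr h.2⟩]
  · rintro ⟨r', h | h⟩
    exacts [⟨r', Or.inl ⟨hg.color _ _ _ h, h⟩⟩, ⟨r', Or.inr ⟨hg.color _ _ _ h, h⟩⟩]

lemma Good.conn_mono (hg : Good Γ r) : (Γ.mono r).Connected := by
  intro a ha b hb
  have : (Γ.mono r).Adj = Γ.Adj := hg.adj_mono
  rw [this]
  exact hg.conn a ha b hb

lemma Good.rpath_eq (hg : Good Γ r) {r' : Fin s} (hP : P.IsRPath Γ r') :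
    r' = r ∧ P = Γ.mono r := by
  obtain ⟨⟨hsub, hconn, hmax⟩, hnt⟩ := hP
  have hedge : ∃ r'' a b, P.E r'' a b := by
    by_contra h; push_neg at h; exact hnt fun r'' a b => h r'' a b
  obtain ⟨r'', a, b, he⟩ := hedge
  have h1 := hsub.2 _ _ _ he
  have hr : r' = r := h1.1 ▸ hg.color _ _ _ h1.2
  subst hr
  refine ⟨rfl, ?_⟩
  have h2 := hmax (Γ.mono r') (subgraph_refl _) hg.conn_mono hsub
  refine cgraph_ext (Set.Subset.antisymm hsub.1 h2.1) ?_
  funext r0 a0 b0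
  exact propext ⟨fun h => hsub.2 _ _ _ h, fun h => h2.2 _ _ _ h⟩

lemma Good.isRPath_mono (hg : Good Γ r) : (Γ.mono r).IsRPath Γ r := by
  refine ⟨⟨subgraph_refl _, hg.conn_mono, fun C' h1 _ _ => h1⟩, ?_⟩
  obtain ⟨a, b, he⟩ := hg.edge
  exact fun htriv => htriv r a b ⟨rfl, he⟩

lemma Good.closed_mono_iff (hg : Good Γ r) : (Γ.mono r).Closed ↔ Γ.Closed := by
  constructor <;> intro h a ha
  · obtain ⟨r', b, hb⟩ := h a ha
    exact ⟨r', b, hb.2⟩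
  · obtain ⟨r', b, hb⟩ := h a ha
    exact ⟨r', b, hg.color _ _ _ hb, hb⟩

lemma Good.edgeCount_mono (hg : Good Γ r) : (Γ.mono r).edgeCount = Γ.edgeCount :=
  Nat.card_congr (Equiv.subtypeEquivRight fun p =>
    ⟨fun h => h.2, fun h => ⟨hg.color _ _ _ h, h⟩⟩)

lemma Good.isLoopOf_iff (hg : Good Γ r) :
    P.IsLoopOf Γ ↔ P = Γ.mono r ∧ Γ.Closed := by
  constructor
  · rintro ⟨⟨r', hP⟩, hc⟩
    obtain ⟨-, rfl⟩ := hg.rpath_eq hP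
    exact ⟨rfl, hg.closed_mono_iff.1 hc⟩
  · rintro ⟨rfl, hc⟩
    exact ⟨⟨r, hg.isRPath_mono⟩, hg.closed_mono_iff.2 hc⟩

lemma Good.loopCount_closed (hg : Good Γ r) (h : Γ.Closed) : Γ.loopCount = 1 := by
  unfold CGraph.loopCount
  rw [Nat.card_eq_one_iff_unique]
  refine ⟨⟨fun P1 P2 => Subtype.ext ?_⟩, ⟨⟨Γ.mono r, hg.isLoopOf_iff.2 ⟨rfl, h⟩⟩⟩⟩
  rw [(hg.isLoopOf_iff.1 P1.2).1, (hg.isLoopOf_iff.1 P2.2).1]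

lemma Good.loopCount_not_closed (hg : Good Γ r) (h : ¬Γ.Closed) : Γ.loopCount = 0 := by
  unfold CGraph.loopCount
  have : IsEmpty {P : CGraph V s // P.IsLoopOf Γ} :=
    ⟨fun P => h ((hg.isLoopOf_iff.1 P.2).2)⟩
  exact Nat.card_of_isEmpty

lemma Good.sa_iff (hg : Good Γ r) :
    Γ.StronglyAdmissible d ↔ Γ.Admissible ∧
      ((Γ.Closed → (Γ.edgeCount : ℕ∞) = d r) ∧
        (¬Γ.Closed → (Γ.edgeCount : ℕ∞) < d r)) := by
  unfold CGraph.StronglyAdmissible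
  refine and_congr_right fun _ => ⟨fun h => ?_, fun h r' P hP => ?_⟩
  · have := h r (Γ.mono r) hg.isRPath_mono
    rwa [hg.closed_mono_iff, hg.edgeCount_mono] at this
  · obtain ⟨rfl, rfl⟩ := hg.rpath_eq hP
    rwa [hg.closed_mono_iff, hg.edgeCount_mono]

lemma Good.quot_good (hg : Good Γ r) (π : Setoid V) : Good (Γ.quot π) r := by
  constructor
  · rintro r' A B ⟨a, b, he, -, -⟩; exact hg.color _ _ _ he
  · rintro A ⟨a, ha, rfl⟩ B ⟨b, hb, rfl⟩
    refine Relation.ReflTransGen.lift (Quotient.mk π) ?_ _ _ (hg.conn a ha b hb)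
    rintro x y ⟨r', h | h⟩
    exacts [⟨r', Or.inl ⟨x, y, h, rfl, rfl⟩⟩, ⟨r', Or.inr ⟨y, x, h, rfl, rfl⟩⟩]
  · obtain ⟨a, b, he⟩ := hg.edge
    exact ⟨_, _, a, b, he, rfl, rfl⟩

lemma Good.edgeCount_le_vertCount (hg : Good Γ r) (ha : Γ.Admissible) :
    Γ.edgeCount ≤ Γ.vertCount := by
  haveI : Finite Γ.verts := Γ.finite.to_subtype
  refine Nat.card_le_card_of_injective
    (fun p => (⟨p.1.2.1, Γ.memL _ _ _ p.2⟩ : Γ.verts)) ?_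
  rintro ⟨⟨r1, a1, b1⟩, h1⟩ ⟨⟨r2, a2, b2⟩, h2⟩ h
  simp only [Subtype.mk.injEq] at h
  have hr1 := hg.color _ _ _ h1
  have hr2 := hg.color _ _ _ h2
  subst hr1; subst hr2; subst h
  have : b1 = b2 := ha.1 _ _ _ _ h1 h2
  subst this
  rfl

lemma quot_closed (π : Setoid V) (h : ∀ a ∈ Γ.verts, ∃ r' b, Γ.E r' a b) :
    (Γ.quot π).Closed := by
  rintro A ⟨a, ha, rfl⟩
  obtain ⟨r', b, hb⟩ := h a ha
  exact ⟨r', Quotient.mk π b, a, b, hb, rfl, rfl⟩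

end Aux

section Aux2

open CGraph

variable {s : ℕ}

lemma nxt_eq_add_one {n : ℕ} [NeZero n] (k : Fin n) : nxt k = k + 1 := by
  have hn : 0 < n := Nat.pos_of_ne_zero (NeZero.ne n)
  apply Fin.ext
  rw [Fin.add_def, Fin.val_one']
  show (k.1 + 1) % n = (k.1 + 1 % n) % n
  conv_lhs => rw [Nat.add_mod]
  conv_rhs => rw [Nat.add_mod, Nat.mod_mod_of_dvd _ dvd_rfl]

lemma nxt_injective {n : ℕ} : Function.Injective (nxt : Fin n → Fin n) := by
  intro a b h
  haveI : NeZero n := ⟨a.pos.ne'⟩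
  rw [nxt_eq_add_one, nxt_eq_add_one] at h
  exact add_right_cancel h

lemma nxt_surjective {n : ℕ} (hn : 0 < n) :
    Function.Surjective (nxt : Fin n → Fin n) := by
  haveI : NeZero n := ⟨hn.ne'⟩
  intro b
  refine ⟨b - 1, ?_⟩
  rw [nxt_eq_add_one]
  exact sub_add_cancel b 1

/-- `nxt` as an equivalence. -/
def nxtEquiv {n : ℕ} (hn : 0 < n) : Fin n ≃ Fin n :=
  Equiv.ofBijective nxt ⟨nxt_injective, nxt_surjective hn⟩

lemma wordGraph_adj_nxt (x : List (Fin s × Bool)) (hx : x ≠ [])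
    (k : Fin x.length) : (wordGraph x hx).Adj k (nxt k) := by
  rcases h : x.get k with ⟨r, b⟩
  cases b
  · exact ⟨r, Or.inl ⟨k, Or.inr ⟨h, rfl, rfl⟩⟩⟩
  · exact ⟨r, Or.inr ⟨k, Or.inl ⟨h, rfl, rfl⟩⟩⟩

open Fin.NatCast in
lemma wordGraph_connected (x : List (Fin s × Bool)) (hx : x ≠ []) :
    (wordGraph x hx).Connected := by
  have hn : 0 < x.length := List.length_pos_iff.mpr hx
  haveI : NeZero x.length := ⟨hn.ne'⟩
  have step : ∀ (a : Fin x.length) (j : ℕ),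
      Relation.ReflTransGen (wordGraph x hx).Adj a (a + (j : Fin x.length)) := by
    intro a j
    induction j with
    | zero => simpa using Relation.ReflTransGen.refl
    | succ j ih =>
      have : (a + ((j : ℕ) + 1 : ℕ)) = nxt (a + (j : Fin x.length)) := by
        rw [nxt_eq_add_one]
        push_cast
        exact (add_assoc _ _ _).symm
      rw [this]
      exact ih.tail (wordGraph_adj_nxt x hx _)
  intro a _ b _
  have := step a ((b - a).val)
  rwa [Fin.cast_val_eq_self, add_sub_cancel] at this
end Aux2

section Aux3

open CGraph

variable {s : ℕ} {d : Fin s → ℕ∞}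

/-- The discrete ("equality") setoid. -/
def eqSetoid (V : Type) : Setoid V := ⟨Eq, ⟨fun _ => rfl, Eq.symm, Eq.trans⟩⟩

lemma quot_vertCount {V : Type} (Γ : CGraph V s) (hu : Γ.verts = Set.univ)
    (π : Setoid V) (hinj : Function.Injective (Quotient.mk π)) :
    (Γ.quot π).vertCount = Nat.card V := by
  unfold CGraph.vertCount
  show Nat.card ↑(Quotient.mk π '' Γ.verts) = _
  rw [hu, Set.image_univ]
  exact (Nat.card_congr (Equiv.ofInjective _ hinj)).symm

lemma mk_injective_of_disc {V : Type} {π : Setoid V}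
    (hdisc : ∀ a b, π.r a b → a = b) :
    Function.Injective (Quotient.mk π) :=
  fun a b h => hdisc a b (Quotient.exact h)

/-- The main lemma for the cycle cases. -/
lemma cycle_case (d : Fin s → ℕ∞) (x : List (Fin s × Bool)) (hx : x ≠ [])
    (r : Fin s) (σ : Fin x.length ≃ Fin x.length)
    (hchar : ∀ r' (a b : Fin x.length),
      (wordGraph x hx).E r' a b ↔ (r' = r ∧ a = σ b))
    (hdr : d r = (x.length : ℕ∞)) :
    sconCount d (wordGraph x hx) = 1 := by
  set Γ := wordGraph x hx with hΓ
  have hn : 0 < x.length := List.length_pos_iff.mpr hx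
  have hgood : Good Γ r := by
    constructor
    · intro r' a b h
      exact ((hchar r' a b).1 h).1
    · exact wordGraph_connected x hx
    · exact ⟨σ ⟨0, hn⟩, ⟨0, hn⟩, (hchar r _ _).2 ⟨rfl, rfl⟩⟩
  have hout : ∀ a ∈ Γ.verts, ∃ r' b, Γ.E r' a b :=
    fun a _ => ⟨r, σ.symm a, (hchar r _ _).2 ⟨rfl, (σ.apply_symm_apply a).symm⟩⟩
  have hclosed : ∀ π : Setoid (Fin x.length), (Γ.quot π).Closed :=
    fun π => quot_closed π hout
  -- the key characterization
  have key : ∀ π : Setoid (Fin x.length),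
      (Γ.IsStrongCongruence d π ∧ (Γ.quot π).chi = 1) ↔
        (∀ a b : Fin x.length, π.r a b → a = b) := by
    intro π
    have hQg : Good (Γ.quot π) r := hgood.quot_good π
    constructor
    · rintro ⟨⟨hcong, hSA⟩, hchi⟩
      obtain ⟨hadm, hcl, -⟩ := hQg.sa_iff.1 hSA
      have hec : (Γ.quot π).edgeCount = x.length := by
        have := (hcl (hclosed π)).trans hdr
        exact_mod_cast this
      intro a b hab
      by_contra hne
      -- then the quotient has fewer than n vertices
      have hvlt : (Γ.quot π).vertCount < x.length := by
        have hv : (Γ.quot π).vertCount = Nat.card (Quotient π) := by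
          unfold CGraph.vertCount
          show Nat.card ↑(Quotient.mk π '' (wordGraph x hx).verts) = _
          have : (wordGraph x hx).verts = Set.univ := rfl
          rw [this, Set.image_univ,
            Set.range_eq_univ.mpr (fun q => Quotient.inductionOn q fun a => ⟨a, rfl⟩)]
          exact Nat.card_congr (Equiv.Set.univ _)
        rw [hv]
        haveI : Finite (Quotient π) := Quotient.finite π
        letI : Fintype (Quotient π) := Fintype.ofFinite _
        rw [Nat.card_eq_fintype_card]
        have := Fintype.card_lt_of_surjective_not_injective (Quotient.mk π)
          (fun q => Quotient.inductionOn q fun a => ⟨a, rfl⟩)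
          (fun hinj => hne (hinj (Quotient.sound hab)))
        simpa using this
      have := hQg.edgeCount_le_vertCount hadm
      omega
    · intro hdisc
      have hinj := mk_injective_of_disc hdisc
      -- edge count of the quotient
      have hec : (Γ.quot π).edgeCount = x.length := by
        unfold CGraph.edgeCount
        have hbij : Function.Bijective (fun k : Fin x.length =>
            (⟨(r, Quotient.mk π (σ k), Quotient.mk π k), ⟨σ k, k,
              (hchar r _ _).2 ⟨rfl, rfl⟩, rfl, rfl⟩⟩ :
              {p : Fin s × Quotient π × Quotient π //
                (Γ.quot π).E p.1 p.2.1 p.2.2})) := by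
          constructor
          · intro k k' h
            simp only [Subtype.mk.injEq, Prod.mk.injEq] at h
            exact hinj (congrArg (fun p => p.1.2.2) h)
          · rintro ⟨⟨r', A, B⟩, ⟨a, b, he, ha, hb⟩⟩
            obtain ⟨rfl, rfl⟩ := (hchar r' a b).1 he
            exact ⟨b, by simp [ha, hb]⟩
        rw [← Nat.card_congr (Equiv.ofBijective _ hbij)]
        simp
      have hvc : (Γ.quot π).vertCount = x.length := by
        rw [quot_vertCount Γ rfl π hinj]; simp
      have hadm : (Γ.quot π).Admissible := by
        constructor
        · rintro r' A B B' ⟨a, b, he, ha, hb⟩ ⟨a', b', he', ha', hb'⟩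
          obtain ⟨rfl, rfl⟩ := (hchar r' a b).1 he
          obtain ⟨-, rfl⟩ := (hchar r' a' b').1 he'
          rw [← ha'] at ha
          have : b' = b := (σ.injective (hinj ha)).symm
          rw [← hb, ← hb', this]
        · rintro r' A A' B ⟨a, b, he, ha, hb⟩ ⟨a', b', he', ha', hb'⟩
          obtain ⟨rfl, rfl⟩ := (hchar r' a b).1 he
          obtain ⟨-, rfl⟩ := (hchar r' a' b').1 he'
          rw [← hb'] at hb
          have : b' = b := (hinj hb).symm
          rw [← ha, ← ha', this]
      refine ⟨⟨?_, ?_⟩, ?_⟩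
      · -- congruence
        intro r' a₁ b₁ a₂ b₂ h₁ h₂
        obtain ⟨rfl, rfl⟩ := (hchar r' a₁ b₁).1 h₁
        obtain ⟨-, rfl⟩ := (hchar r' a₂ b₂).1 h₂
        constructor
        · intro h
          have := σ.injective (hdisc _ _ h)
          exact this ▸ π.iseqv.refl _
        · intro h
          have := hdisc _ _ h
          exact this ▸ π.iseqv.refl _
      · -- strongly admissible
        refine hQg.sa_iff.2 ⟨hadm, fun _ => ?_, fun hnc => absurd (hclosed π) hnc⟩
        rw [hec, hdr]
      · -- chi = 1
        unfold CGraph.chi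
        rw [hec, hvc, hQg.loopCount_closed (hclosed π)]
        ring
  unfold sconCount
  rw [Nat.card_eq_one_iff_unique]
  constructor
  · refine ⟨fun π₁ π₂ => Subtype.ext (setoid_ext' fun a b => ?_)⟩
    have h1 := (key π₁.1).1 π₁.2
    have h2 := (key π₂.1).1 π₂.2
    exact ⟨fun h => (h1 a b h) ▸ π₂.1.iseqv.refl _,
      fun h => (h2 a b h) ▸ π₁.1.iseqv.refl _⟩
  · exact ⟨⟨eqSetoid _, (key _).2 fun a b h => h⟩⟩

end Aux3

section Aux4

open CGraph

variable {s : ℕ}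

/-- The indiscrete setoid. -/
def allSetoid (V : Type) : Setoid V :=
  ⟨fun _ _ => True, ⟨fun _ => trivial, fun _ => trivial, fun _ _ => trivial⟩⟩

/-- The main lemma for the two-letter cases. -/
lemma two_letter_case (d : Fin s → ℕ∞) (x : List (Fin s × Bool)) (hx : x ≠ [])
    (r : Fin s) (v0 v1 : Fin x.length) (hv : v0 ≠ v1)
    (hall : ∀ c : Fin x.length, c = v0 ∨ c = v1)
    (hchar : ∀ r' (a b : Fin x.length),
      (wordGraph x hx).E r' a b ↔ (r' = r ∧ a = v1 ∧ b = v0))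
    (hcard : Nat.card (Fin x.length) = 2)
    (hd1 : 1 ≤ d r) :
    sconCount d (wordGraph x hx) = 1 := by
  set Γ := wordGraph x hx with hΓ
  have hgood : Good Γ r := by
    constructor
    · intro r' a b h
      exact ((hchar r' a b).1 h).1
    · exact wordGraph_connected x hx
    · exact ⟨v1, v0, (hchar r _ _).2 ⟨rfl, rfl, rfl⟩⟩
  have classify : ∀ π : Setoid (Fin x.length),
      (∀ a b, π.r a b → a = b) ∨ (∀ a b, π.r a b) := by
    intro π
    by_cases h : π.r v0 v1
    · refine Or.inr fun a b => ?_
      rcases hall a with rfl | rfl <;> rcases hall b with rfl | rfl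
      · exact π.iseqv.refl _
      · exact h
      · exact π.iseqv.symm h
      · exact π.iseqv.refl _
    · refine Or.inl fun a b hab => ?_
      rcases hall a with rfl | rfl <;> rcases hall b with rfl | rfl
      · rfl
      · exact absurd hab h
      · exact absurd (π.iseqv.symm hab) h
      · rfl
  have hcong : ∀ π : Setoid (Fin x.length), Γ.IsCongruence π := by
    intro π r' a₁ b₁ a₂ b₂ h₁ h₂
    obtain ⟨-, rfl, rfl⟩ := (hchar r' a₁ b₁).1 h₁
    obtain ⟨-, rfl, rfl⟩ := (hchar r' a₂ b₂).1 h₂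
    exact iff_of_true (π.iseqv.refl _) (π.iseqv.refl _)
  -- the discrete case
  have condD : ∀ π : Setoid (Fin x.length), (∀ a b, π.r a b → a = b) →
      ((Γ.IsStrongCongruence d π ∧ (Γ.quot π).chi = 1) ↔ 1 < d r) := by
    intro π hdisc
    have hinj := mk_injective_of_disc hdisc
    have hQg : Good (Γ.quot π) r := hgood.quot_good π
    have QE : ∀ r' A B, (Γ.quot π).E r' A B ↔
        (r' = r ∧ A = Quotient.mk π v1 ∧ B = Quotient.mk π v0) := by
      intro r' A B
      constructor
      · rintro ⟨a, b, he, rfl, rfl⟩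
        obtain ⟨rfl, rfl, rfl⟩ := (hchar r' a b).1 he
        exact ⟨rfl, rfl, rfl⟩
      · rintro ⟨rfl, rfl, rfl⟩
        exact ⟨v1, v0, (hchar r' _ _).2 ⟨rfl, rfl, rfl⟩, rfl, rfl⟩
    have hnc : ¬ (Γ.quot π).Closed := by
      intro h
      obtain ⟨r', B, hB⟩ := h (Quotient.mk π v0) ⟨v0, Set.mem_univ _, rfl⟩
      obtain ⟨-, hAB, -⟩ := (QE r' _ B).1 hB
      exact hv (hinj hAB)
    have hec : (Γ.quot π).edgeCount = 1 := by
      unfold CGraph.edgeCount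
      rw [Nat.card_eq_one_iff_unique]
      constructor
      · refine ⟨fun p q => Subtype.ext ?_⟩
        obtain ⟨⟨r1, A1, B1⟩, h1⟩ := p
        obtain ⟨⟨r2, A2, B2⟩, h2⟩ := q
        obtain ⟨rfl, rfl, rfl⟩ := (QE r1 A1 B1).1 h1
        obtain ⟨rfl, rfl, rfl⟩ := (QE r2 A2 B2).1 h2
        rfl
      · exact ⟨⟨(r, Quotient.mk π v1, Quotient.mk π v0), (QE r _ _).2 ⟨rfl, rfl, rfl⟩⟩⟩
    have hvc : (Γ.quot π).vertCount = 2 := by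
      rw [quot_vertCount Γ rfl π hinj, hcard]
    have hadm : (Γ.quot π).Admissible := by
      constructor
      · intro r' A B B' h h'
        obtain ⟨-, -, rfl⟩ := (QE r' A B).1 h
        obtain ⟨-, -, rfl⟩ := (QE r' A B').1 h'
        rfl
      · intro r' A A' B h h'
        obtain ⟨-, rfl, -⟩ := (QE r' A B).1 h
        obtain ⟨-, rfl, -⟩ := (QE r' A' B).1 h'
        rfl
    constructor
    · rintro ⟨⟨-, hSA⟩, -⟩
      have := (hQg.sa_iff.1 hSA).2.2 hnc
      rw [hec] at this
      exact_mod_cast this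
    · intro hlt
      refine ⟨⟨hcong π, hQg.sa_iff.2 ⟨hadm, fun h => absurd h hnc, fun _ => ?_⟩⟩, ?_⟩
      · rw [hec]; exact_mod_cast hlt
      · unfold CGraph.chi
        rw [hec, hvc, hQg.loopCount_not_closed hnc]
        ring
  -- the indiscrete case
  have condI : ∀ π : Setoid (Fin x.length), (∀ a b, π.r a b) →
      ((Γ.IsStrongCongruence d π ∧ (Γ.quot π).chi = 1) ↔ d r = 1) := by
    intro π hind
    have hsub : ∀ A B : Quotient π, A = B := fun A B =>
      Quotient.inductionOn₂ A B fun a b => Quotient.sound (hind a b)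
    have hQg : Good (Γ.quot π) r := hgood.quot_good π
    have QE : ∀ r' (A B : Quotient π), (Γ.quot π).E r' A B ↔ r' = r := by
      intro r' A B
      constructor
      · rintro ⟨a, b, he, -, -⟩
        exact ((hchar r' a b).1 he).1
      · rintro rfl
        exact ⟨v1, v0, (hchar _ v1 v0).2 ⟨rfl, rfl, rfl⟩, hsub _ _, hsub _ _⟩
    have hcl : (Γ.quot π).Closed := fun A _ => ⟨r, A, (QE r A A).2 rfl⟩
    have hec : (Γ.quot π).edgeCount = 1 := by
      unfold CGraph.edgeCount
      rw [Nat.card_eq_one_iff_unique]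
      constructor
      · refine ⟨fun p q => Subtype.ext ?_⟩
        have h1 := (QE _ _ _).1 p.2
        have h2 := (QE _ _ _).1 q.2
        exact Prod.ext_iff.mpr ⟨h1.trans h2.symm,
          Prod.ext_iff.mpr ⟨hsub _ _, hsub _ _⟩⟩
      · exact ⟨⟨(r, Quotient.mk π v0, Quotient.mk π v0), (QE r _ _).2 rfl⟩⟩
    have hvc : (Γ.quot π).vertCount = 1 := by
      unfold CGraph.vertCount
      rw [Nat.card_eq_one_iff_unique]
      constructor
      · exact ⟨fun A B => Subtype.ext (hsub A.1 B.1)⟩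
      · exact ⟨⟨Quotient.mk π v0, ⟨v0, Set.mem_univ _, rfl⟩⟩⟩
    have hadm : (Γ.quot π).Admissible :=
      ⟨fun _ _ _ _ _ _ => hsub _ _, fun _ _ _ _ _ _ => hsub _ _⟩
    constructor
    · rintro ⟨⟨-, hSA⟩, -⟩
      have := (hQg.sa_iff.1 hSA).2.1 hcl
      rw [hec] at this
      exact_mod_cast this.symm
    · intro hdr
      refine ⟨⟨hcong π, hQg.sa_iff.2 ⟨hadm, fun _ => ?_, fun h => absurd hcl h⟩⟩, ?_⟩
      · rw [hec, hdr]; rfl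
      · unfold CGraph.chi
        rw [hec, hvc, hQg.loopCount_closed hcl]
        ring
  unfold sconCount
  rw [Nat.card_eq_one_iff_unique]
  by_cases hD : d r = 1
  · constructor
    · refine ⟨fun π₁ π₂ => Subtype.ext (setoid_ext' fun a b => ?_)⟩
      have h1 : ∀ a b, π₁.1.r a b := by
        rcases classify π₁.1 with h | h
        · exact absurd (hD ▸ (condD π₁.1 h).1 π₁.2) (lt_irrefl _)
        · exact h
      have h2 : ∀ a b, π₂.1.r a b := by
        rcases classify π₂.1 with h | h
        · exact absurd (hD ▸ (condD π₂.1 h).1 π₂.2) (lt_irrefl _)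
        · exact h
      exact iff_of_true (h1 a b) (h2 a b)
    · exact ⟨⟨allSetoid _, (condI _ fun _ _ => trivial).2 hD⟩⟩
  · have h1d : 1 < d r := lt_of_le_of_ne hd1 (Ne.symm hD)
    constructor
    · refine ⟨fun π₁ π₂ => Subtype.ext (setoid_ext' fun a b => ?_)⟩
      have h1 : ∀ a b, π₁.1.r a b → a = b := by
        rcases classify π₁.1 with h | h
        · exact h
        · exact absurd ((condI π₁.1 h).1 π₁.2) hD
      have h2 : ∀ a b, π₂.1.r a b → a = b := by
        rcases classify π₂.1 with h | h
        · exact h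
        · exact absurd ((condI π₂.1 h).1 π₂.2) hD
      exact ⟨fun h => (h1 a b h) ▸ π₂.1.iseqv.refl _,
        fun h => (h2 a b h) ▸ π₁.1.iseqv.refl _⟩
    · exact ⟨⟨eqSetoid _, (condD _ fun _ _ h => h).2 h1d⟩⟩

end Aux4

/-- If `x` is one of the words `g_r g_r^*`, `g_r^* g_r`, `g_r^{d_r}`, `(g_r^*)^{d_r}`,
then the word-graph `Γ_x` has exactly one strong congruence `π` with `χ(Γ_x/π) = 1`. -/
theorem sconCount_special_word (s : ℕ) (hs : 0 < s) (d : Fin s → ℕ∞)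
    (hd : ∀ r, 1 ≤ d r) (x : List (Fin s × Bool)) (hx : x ≠ [])
    (hxs : IsSpecialWord s d x) :
    sconCount d (wordGraph x hx) = 1 := by
  obtain ⟨r, h1 | h2 | ⟨m, hm, h3 | h4⟩⟩ := hxs
  · -- x = [(r, true), (r, false)]
    subst h1
    have e0 : (0:ℕ) < ([(r, true), (r, false)] : List (Fin s × Bool)).length := by norm_num
    have e1 : (1:ℕ) < ([(r, true), (r, false)] : List (Fin s × Bool)).length := by norm_num
    refine two_letter_case d _ hx r ⟨0, e0⟩ ⟨1, e1⟩
      ?_ ?_ ?_ (by simp [Nat.card_eq_fintype_card]) (hd r)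
    · simp [Fin.ext_iff]
    · rintro ⟨cv, hc⟩
      simp only [List.length_cons, List.length_nil] at hc
      interval_cases cv
      · exact Or.inl rfl
      · exact Or.inr rfl
    intro r' a b
    constructor
    · rintro ⟨⟨kv, hk⟩, ⟨hg, ha, hb⟩ | ⟨hg, ha, hb⟩⟩ <;>
      · simp only [List.length_cons, List.length_nil] at hk
        interval_cases kv <;> (subst ha hb; simp [nxt, Fin.ext_iff] at hg ⊢ <;> simp_all)
    · rintro ⟨rfl, rfl, rfl⟩
      exact ⟨⟨0, e0⟩, Or.inl ⟨rfl, by simp [nxt, Fin.ext_iff], rfl⟩⟩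
  · -- x = [(r, false), (r, true)]
    subst h2
    have e0 : (0:ℕ) < ([(r, false), (r, true)] : List (Fin s × Bool)).length := by norm_num
    have e1 : (1:ℕ) < ([(r, false), (r, true)] : List (Fin s × Bool)).length := by norm_num
    refine two_letter_case d _ hx r ⟨1, e1⟩ ⟨0, e0⟩
      ?_ ?_ ?_ (by simp [Nat.card_eq_fintype_card]) (hd r)
    · simp [Fin.ext_iff]
    · rintro ⟨cv, hc⟩
      simp only [List.length_cons, List.length_nil] at hc
      interval_cases cv
      · exact Or.inr rfl
      · exact Or.inl rfl
    intro r' a b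
    constructor
    · rintro ⟨⟨kv, hk⟩, ⟨hg, ha, hb⟩ | ⟨hg, ha, hb⟩⟩ <;>
      · simp only [List.length_cons, List.length_nil] at hk
        interval_cases kv <;> (subst ha hb; simp [nxt, Fin.ext_iff] at hg ⊢ <;> simp_all)
    · rintro ⟨rfl, rfl, rfl⟩
      exact ⟨⟨0, e0⟩, Or.inr ⟨rfl, rfl, by simp [nxt, Fin.ext_iff]⟩⟩
  · -- x = replicate m (r, true)
    subst h3
    have hn : 0 < (List.replicate m ((r, true) : Fin s × Bool)).length :=
      List.length_pos_iff.mpr hx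
    refine cycle_case d _ hx r (nxtEquiv hn) ?_ (by simp [hm])
    intro r' a b
    constructor
    · rintro ⟨k, ⟨hg, rfl, rfl⟩ | ⟨hg, rfl, rfl⟩⟩
      · rw [List.get_eq_getElem, List.getElem_replicate] at hg
        simp only [Prod.mk.injEq] at hg
        exact ⟨hg.1.symm, rfl⟩
      · rw [List.get_eq_getElem, List.getElem_replicate] at hg
        simp at hg
    · rintro ⟨rfl, rfl⟩
      exact ⟨b, Or.inl ⟨by rw [List.get_eq_getElem, List.getElem_replicate], rfl, rfl⟩⟩
  · -- x = replicate m (r, false)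
    subst h4
    have hn : 0 < (List.replicate m ((r, false) : Fin s × Bool)).length :=
      List.length_pos_iff.mpr hx
    refine cycle_case d _ hx r (nxtEquiv hn).symm ?_ (by simp [hm])
    intro r' a b
    constructor
    · rintro ⟨k, ⟨hg, rfl, rfl⟩ | ⟨hg, rfl, rfl⟩⟩
      · rw [List.get_eq_getElem, List.getElem_replicate] at hg
        simp at hg
      · rw [List.get_eq_getElem, List.getElem_replicate] at hg
        simp only [Prod.mk.injEq] at hg
        refine ⟨hg.1.symm, ?_⟩
        rw [Equiv.eq_symm_apply]
        rfl
    · rintro ⟨rfl, rfl⟩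
      exact ⟨(nxtEquiv hn).symm b, Or.inr ⟨by rw [List.get_eq_getElem, List.getElem_replicate], rfl,
        ((nxtEquiv hn).apply_symm_apply b).symm⟩⟩
end
end

section
/- Let w ∈ 𝔽∖{e} and let π be a strong congruence of the word-graph Γ_w. If Γ_w/π has a path P such that at most one vertex of P belongs to other paths of Γ_w/π, then some cyclic permutation of the symbols of w is of the form vx, where x ∈ {g_r g_r^*, g_r^* g_r : r∈[s]} ∪ {g_r^{d_r}, (g_r^*)^{d_r} : r∈[s], d_r < ∞}. -/
noncomputable section

open Filter Topology

namespace CGraph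

variable {V : Type} {s : ℕ}

lemma adj_symm (Γ : CGraph V s) {a b : V} (h : Γ.Adj a b) : Γ.Adj b a := by
  obtain ⟨r, h⟩ := h; exact ⟨r, h.symm⟩

/-- The connected component of `A` in `Γ`. -/
def comp (Γ : CGraph V s) (A : V) (hA : A ∈ Γ.verts) : CGraph V s where
  verts := {B | B ∈ Γ.verts ∧ Relation.ReflTransGen Γ.Adj A B}
  finite := Γ.finite.subset (fun x hx => hx.1)
  nonem := ⟨A, hA, Relation.ReflTransGen.refl⟩
  E := fun r a b => Γ.E r a b ∧
    (Relation.ReflTransGen Γ.Adj A a ∨ Relation.ReflTransGen Γ.Adj A b)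
  memL := fun r a b h => by
    refine ⟨Γ.memL r a b h.1, ?_⟩
    rcases h.2 with h2 | h2
    · exact h2
    · exact h2.tail ⟨r, Or.inr h.1⟩
  memR := fun r a b h => by
    refine ⟨Γ.memR r a b h.1, ?_⟩
    rcases h.2 with h2 | h2
    · exact h2.tail ⟨r, Or.inl h.1⟩
    · exact h2

lemma comp_verts_mem {Γ : CGraph V s} {A : V} (hA : A ∈ Γ.verts) {B : V} :
    B ∈ (Γ.comp A hA).verts ↔ B ∈ Γ.verts ∧ Relation.ReflTransGen Γ.Adj A B :=
  Iff.rfl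

lemma comp_isComponent (Γ : CGraph V s) (A : V) (hA : A ∈ Γ.verts) :
    (Γ.comp A hA).IsComponent Γ := by
  have hsub : (Γ.comp A hA).Subgraph Γ := ⟨fun x hx => hx.1, fun r a b h => h.1⟩
  have hreach : ∀ B, Relation.ReflTransGen Γ.Adj A B →
      Relation.ReflTransGen (Γ.comp A hA).Adj A B := by
    intro B h
    induction h with
    | refl => exact Relation.ReflTransGen.refl
    | tail hab hbc ih =>
      refine ih.tail ?_
      obtain ⟨r, hr | hr⟩ := hbc
      · exact ⟨r, Or.inl ⟨hr, Or.inl hab⟩⟩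
      · exact ⟨r, Or.inr ⟨hr, Or.inr hab⟩⟩
  have hconn : (Γ.comp A hA).Connected := by
    intro a ha b hb
    have hsy : Symmetric (Γ.comp A hA).Adj := fun x y h => adj_symm _ h
    have h1 := hreach a ha.2
    have h2 := hreach b hb.2
    exact Relation.ReflTransGen.trans
      (by haveI : Std.Symm (Γ.comp A hA).Adj := ⟨hsy⟩; exact Relation.ReflTransGen.symmetric.symm _ _ h1) h2
  refine ⟨hsub, hconn, ?_⟩
  intro C' hC' hconn' hsub'
  have hAC' : A ∈ C'.verts := hsub'.1 ⟨hA, Relation.ReflTransGen.refl⟩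
  have key : ∀ x ∈ C'.verts, Relation.ReflTransGen Γ.Adj A x := by
    intro x hx
    have := hconn' A hAC' x hx
    refine Relation.ReflTransGen.mono ?_ _ _ this
    intro u v huv
    obtain ⟨r, h | h⟩ := huv
    · exact ⟨r, Or.inl (hC'.2 _ _ _ h)⟩
    · exact ⟨r, Or.inr (hC'.2 _ _ _ h)⟩
  refine ⟨fun x hx => ⟨hC'.1 hx, key x hx⟩, ?_⟩
  intro r a b h
  exact ⟨hC'.2 _ _ _ h, Or.inl (key a (C'.memL _ _ _ h))⟩

/-- A component containing a vertex absorbs any edge incident to that vertex. -/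
lemma IsComponent.absorb {P Γ : CGraph V s} (hP : P.IsComponent Γ)
    {r : Fin s} {a b : V} (hE : Γ.E r a b) (hab : a ∈ P.verts ∨ b ∈ P.verts) :
    P.E r a b := by
  obtain ⟨A, hAv⟩ : ∃ A, A ∈ P.verts ∧ A = a ∨ A ∈ P.verts ∧ A = b := by
    rcases hab with h | h
    · exact ⟨a, Or.inl ⟨h, rfl⟩⟩
    · exact ⟨b, Or.inr ⟨h, rfl⟩⟩
  have hAP : A ∈ P.verts := by rcases hAv with ⟨h, _⟩ | ⟨h, _⟩ <;> exact h
  have hAΓ : A ∈ Γ.verts := hP.1.1 hAP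
  -- P is mutually a subgraph with comp Γ A
  have hPsub : P.Subgraph (Γ.comp A hAΓ) := by
    have key : ∀ x ∈ P.verts, Relation.ReflTransGen Γ.Adj A x := by
      intro x hx
      refine Relation.ReflTransGen.mono ?_ _ _ (hP.2.1 A hAP x hx)
      intro u v huv
      obtain ⟨r', h | h⟩ := huv
      · exact ⟨r', Or.inl (hP.1.2 _ _ _ h)⟩
      · exact ⟨r', Or.inr (hP.1.2 _ _ _ h)⟩
    exact ⟨fun x hx => ⟨hP.1.1 hx, key x hx⟩,
      fun r' x y h => ⟨hP.1.2 _ _ _ h, Or.inl (key x (P.memL _ _ _ h))⟩⟩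
  have hback := hP.2.2 _ (comp_isComponent Γ A hAΓ).1 (comp_isComponent Γ A hAΓ).2.1 hPsub
  refine hback.2 _ _ _ ?_
  rcases hAv with ⟨_, rfl⟩ | ⟨_, rfl⟩
  · exact ⟨hE, Or.inl Relation.ReflTransGen.refl⟩
  · exact ⟨hE, Or.inr Relation.ReflTransGen.refl⟩

end CGraph

lemma exists_cyclic_factor {α : Type} (w : List α) (hn0 : 0 < w.length) (p m : ℕ)
    (hm : m ≤ w.length) (x : List α) (hx : x.length = m)
    (hlet : ∀ j (hj : j < m),
      w[(p + j) % w.length]'(Nat.mod_lt _ hn0) = x[j]'(hx ▸ hj)) :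
    ∃ w₁ w₂ v : List α, w = w₁ ++ w₂ ∧ w₂ ++ w₁ = v ++ x := by
  set n := w.length with hn
  set t := (p + m) % n with ht
  have htn : t ≤ n := (Nat.mod_lt _ hn0).le
  refine ⟨w.take t, w.drop t, (w.rotate t).take (n - m), (w.take_append_drop t).symm, ?_⟩
  have hrot : w.drop t ++ w.take t = w.rotate t := (List.rotate_eq_drop_append_take htn).symm
  rw [hrot]
  have hdrop : (w.rotate t).drop (n - m) = x := by
    apply List.ext_getElem
    · simp [List.length_rotate, hx, ← hn]; omega
    · intro j hj hj2
      rw [List.getElem_drop, List.getElem_rotate]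
      have hjm : j < m := by
        have := hj; simp [List.length_rotate, ← hn] at this; omega
      have harith : (n - m + j + t) % n = (p + j) % n := by
        rw [ht, Nat.add_mod_mod]
        have : n - m + j + (p + m) = (p + j) + n := by omega
        rw [this, Nat.add_mod_right]
      have := hlet j hjm
      rw [← this]
      congr 1
  conv_lhs => rw [← List.take_append_drop (n - m) (w.rotate t)]
  rw [hdrop]

/-- Let `w ≠ e` and let `π` be a strong congruence of `Γ_w`. If `Γ_w/π` has a path
`P` such that at most one vertex of `P` belongs to other paths of `Γ_w/π`, then some
cyclic permutation of the symbols of `w` is of the form `v x` with `x` one of the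
words `g_r g_r^*`, `g_r^* g_r`, `g_r^{d_r}`, `(g_r^*)^{d_r}`. -/
theorem cyclic_decomposition_of_path_with_one_shared_vertex (s : ℕ) (hs : 0 < s)
    (d : Fin s → ℕ∞) (hd : ∀ r, 1 ≤ d r)
    (w : List (Fin s × Bool)) (hw : w ≠ [])
    (π : Setoid (Fin w.length))
    (hπ : (wordGraph w hw).IsStrongCongruence d π)
    (P : CGraph (Quotient π) s)
    (hP : P.IsPathOf ((wordGraph w hw).quot π))
    (hone : ∀ a b : Quotient π,
      (a ∈ P.verts ∧ ∃ Q : CGraph (Quotient π) s,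
        Q.IsPathOf ((wordGraph w hw).quot π) ∧ Q ≠ P ∧ a ∈ Q.verts) →
      (b ∈ P.verts ∧ ∃ Q : CGraph (Quotient π) s,
        Q.IsPathOf ((wordGraph w hw).quot π) ∧ Q ≠ P ∧ b ∈ Q.verts) →
      a = b) :
    ∃ w₁ w₂ v x : List (Fin s × Bool),
      w = w₁ ++ w₂ ∧ w₂ ++ w₁ = v ++ x ∧ IsSpecialWord s d x := by
  classical
  have hn0 : 0 < w.length := List.length_pos_iff.mpr hw
  let G : CGraph (Quotient π) s := (wordGraph w hw).quot π
  let idx : ℕ → Fin w.length := fun i => ⟨i % w.length, Nat.mod_lt _ hn0⟩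
  let Lt : ℕ → Fin s × Bool := fun i => w.get (idx i)
  let Q : ℕ → Quotient π := fun i => Quotient.mk π (idx i)
  have hidxper : ∀ i, idx (i + w.length) = idx i := by
    intro i; simp only [idx, Nat.add_mod_right]
  have hLtper : ∀ i, Lt (i + w.length) = Lt i := fun i => by
    simp only [Lt, hidxper]
  have hQper : ∀ i, Q (i + w.length) = Q i := fun i => by
    simp only [Q, hidxper]
  have hidxmod : ∀ i, idx (i % w.length) = idx i := by
    intro i; simp only [idx, Nat.mod_mod_of_dvd _ dvd_rfl]
  have hLtmod : ∀ i, Lt (i % w.length) = Lt i := fun i => by simp only [Lt, hidxmod]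
  have hnxt : ∀ i, nxt (idx i) = idx (i + 1) := by
    intro i
    have : (i % w.length + 1) % w.length = (i + 1) % w.length :=
      Nat.mod_add_mod i w.length 1
    simp only [nxt, idx, this]
  have hQvG : ∀ i, Q i ∈ G.verts := fun i => ⟨idx i, Set.mem_univ _, rfl⟩
  -- edges of the quotient word graph
  have hedgeT : ∀ (i : ℕ) (r' : Fin s), Lt i = (r', true) → G.E r' (Q (i+1)) (Q i) := by
    intro i r' h
    exact ⟨idx (i+1), idx i, ⟨idx i, Or.inl ⟨h, (hnxt i).symm, rfl⟩⟩, rfl, rfl⟩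
  have hedgeF : ∀ (i : ℕ) (r' : Fin s), Lt i = (r', false) → G.E r' (Q i) (Q (i+1)) := by
    intro i r' h
    exact ⟨idx i, idx (i+1), ⟨idx i, Or.inr ⟨h, rfl, (hnxt i).symm⟩⟩, rfl, rfl⟩
  have hedge_rev : ∀ (r' : Fin s) (A B : Quotient π), G.E r' A B →
      ∃ i : ℕ, i < w.length ∧
        ((Lt i = (r', true) ∧ A = Q (i+1) ∧ B = Q i) ∨
         (Lt i = (r', false) ∧ A = Q i ∧ B = Q (i+1))) := by
    intro r' A B h
    obtain ⟨a, b, hab, ha, hb⟩ := h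
    obtain ⟨k, hk⟩ := hab
    have hik : idx k.1 = k := by
      simp only [idx]; exact Fin.ext (Nat.mod_eq_of_lt k.2)
    refine ⟨k.1, k.2, ?_⟩
    rcases hk with ⟨hg, hA, hB⟩ | ⟨hg, hA, hB⟩
    · left
      refine ⟨by simp only [Lt, hik]; exact hg, ?_, ?_⟩
      · rw [← ha, hA]; simp only [Q]; rw [← hnxt k.1, hik]
      · rw [← hb, hB]; simp only [Q, hik]
    · right
      refine ⟨by simp only [Lt, hik]; exact hg, ?_, ?_⟩
      · rw [← ha, hA]; simp only [Q, hik]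
      · rw [← hb, hB]; simp only [Q]; rw [← hnxt k.1, hik]
  have hGadm : G.Admissible := hπ.2.1
  obtain ⟨r, hPcomp, hPnt⟩ : ∃ r, P.IsComponent (G.mono r) ∧ ¬ P.Trivial := by
    obtain ⟨r, h1, h2⟩ := hP; exact ⟨r, h1, h2⟩
  have hPmono : ∀ r' a b, P.E r' a b → r' = r ∧ G.E r' a b := fun r' a b h =>
    hPcomp.1.2 r' a b h
  have hPG : ∀ r' a b, P.E r' a b → G.E r' a b := fun r' a b h => (hPmono r' a b h).2
  -- the key absorption + step lemma
  have hstep : ∀ i : ℕ, (Lt i).1 = r → (Q i ∈ P.verts ∨ Q (i+1) ∈ P.verts) →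
      (Q i ∈ P.verts ∧ Q (i+1) ∈ P.verts) ∧
      ((Lt i).2 = true → P.E r (Q (i+1)) (Q i)) ∧
      ((Lt i).2 = false → P.E r (Q i) (Q (i+1))) := by
    intro i hc hor
    have hLi : ((Lt i).1, (Lt i).2) = Lt i := rfl
    cases hb : (Lt i).2 with
    | false =>
      have hE : G.E r (Q i) (Q (i+1)) := by
        apply hedgeF i r; rw [← hLi, hc, hb]
      have hPE : P.E r (Q i) (Q (i+1)) :=
        hPcomp.absorb (show (G.mono r).E r (Q i) (Q (i+1)) from ⟨rfl, hE⟩) hor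
      exact ⟨⟨P.memL _ _ _ hPE, P.memR _ _ _ hPE⟩,
        fun h => by simp at h, fun _ => hPE⟩
    | true =>
      have hE : G.E r (Q (i+1)) (Q i) := by
        apply hedgeT i r; rw [← hLi, hc, hb]
      have hPE : P.E r (Q (i+1)) (Q i) :=
        hPcomp.absorb (show (G.mono r).E r (Q (i+1)) (Q i) from ⟨rfl, hE⟩) hor.symm
      exact ⟨⟨P.memR _ _ _ hPE, P.memL _ _ _ hPE⟩,
        fun _ => hPE, fun h => by simp at h⟩
  -- a P-vertex incident to an edge of another color is shared
  let Sh : Quotient π → Prop := fun a => a ∈ P.verts ∧ ∃ Q' : CGraph (Quotient π) s,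
      Q'.IsPathOf G ∧ Q' ≠ P ∧ a ∈ Q'.verts
  have hpath_other : ∀ (i : ℕ), (Lt i).1 ≠ r → ∀ a : Quotient π,
      (a = Q i ∨ a = Q (i+1)) → a ∈ P.verts → Sh a := by
    intro i hcr a ha haP
    have haG : a ∈ (G.mono ((Lt i).1)).verts := by
      rcases ha with rfl | rfl
      · exact hQvG i
      · exact hQvG (i+1)
    set C := (G.mono ((Lt i).1)).comp a haG with hC
    have hLi : ((Lt i).1, (Lt i).2) = Lt i := rfl
    have hCE : ∃ x y, C.E ((Lt i).1) x y := by
      cases hb : (Lt i).2 with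
      | false =>
        have hE : G.E ((Lt i).1) (Q i) (Q (i+1)) := by
          apply hedgeF i ((Lt i).1); rw [← hLi, hb]
        refine ⟨Q i, Q (i+1), ⟨rfl, hE⟩, ?_⟩
        rcases ha with rfl | rfl
        · exact Or.inl Relation.ReflTransGen.refl
        · exact Or.inr Relation.ReflTransGen.refl
      | true =>
        have hE : G.E ((Lt i).1) (Q (i+1)) (Q i) := by
          apply hedgeT i ((Lt i).1); rw [← hLi, hb]
        refine ⟨Q (i+1), Q i, ⟨rfl, hE⟩, ?_⟩
        rcases ha with rfl | rfl
        · exact Or.inr Relation.ReflTransGen.refl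
        · exact Or.inl Relation.ReflTransGen.refl
    obtain ⟨x, y, hxy⟩ := hCE
    have hCnt : ¬ C.Trivial := fun h => h _ x y hxy
    refine ⟨haP, C, ⟨(Lt i).1, CGraph.comp_isComponent _ a haG, hCnt⟩, ?_,
      ⟨haG, Relation.ReflTransGen.refl⟩⟩
    intro heq
    rw [heq] at hxy
    exact hcr (hPmono _ _ _ hxy).1
  -- getElem form of letters
  have hgetLt : ∀ i : ℕ, w[(i % w.length)]'(Nat.mod_lt _ hn0) = Lt i := fun i => rfl
  -- MAIN CASE SPLIT: is there an adjacent same-color alternating pair?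
  by_cases halt : ∃ i : ℕ, (Lt i).1 = (Lt (i+1)).1 ∧ (Lt i).2 ≠ (Lt (i+1)).2
  · -- Branch 1 : immediate special word of length 2
    obtain ⟨i, hc, hb⟩ := halt
    have hn2 : 2 ≤ w.length := by
      by_contra h
      have h1 : w.length = 1 := by omega
      have : idx (i+1) = idx i := by
        simp only [idx, h1, Nat.mod_one]
      exact hb (by simp only [Lt, this])
    have hLi : ((Lt i).1, (Lt i).2) = Lt i := rfl
    have hLi1 : ((Lt (i+1)).1, (Lt (i+1)).2) = Lt (i+1) := rfl
    obtain ⟨w₁, w₂, v, h1, h2⟩ := exists_cyclic_factor w hn0 i 2 hn2 [Lt i, Lt (i+1)] rfl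
      (by
        intro j hj
        interval_cases j
        · simpa using (hgetLt i)
        · simpa using (hgetLt (i+1)))
    refine ⟨w₁, w₂, v, [Lt i, Lt (i+1)], h1, h2, ⟨(Lt i).1, ?_⟩⟩
    cases hb2 : (Lt i).2 with
    | true =>
      left
      have hb3 : (Lt (i+1)).2 = false := by
        cases h : (Lt (i+1)).2
        · rfl
        · rw [hb2, h] at hb; simp at hb
      rw [← hLi, ← hLi1, hb2, hb3, ← hc]
    | false =>
      right; left
      have hb3 : (Lt (i+1)).2 = true := by
        cases h : (Lt (i+1)).2
        · rw [hb2, h] at hb; simp at hb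
        · rfl
      rw [← hLi, ← hLi1, hb2, hb3, ← hc]
  · -- Branch 2
    push_neg at halt
    have hconst : ∀ i, (Lt i).1 = (Lt (i+1)).1 → Lt i = Lt (i+1) := by
      intro i h
      have h2 := halt i h
      exact Prod.ext h h2
    -- every P-vertex has a neighbor
    have hAdjEx : ∀ a ∈ P.verts, ∃ y, P.Adj a y := by
      intro a ha
      by_cases hsing : ∀ x ∈ P.verts, x = a
      · have hnt := hPnt
        unfold CGraph.Trivial at hnt
        push_neg at hnt
        obtain ⟨r₂, x, y, hE⟩ := hnt
        have hx : x = a := hsing x (P.memL _ _ _ hE)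
        exact ⟨y, r₂, Or.inl (hx ▸ hE)⟩
      · push_neg at hsing
        obtain ⟨x, hx, hxa⟩ := hsing
        rcases (hPcomp.2.1 a ha x hx).cases_head with heq | ⟨y, hay, _⟩
        · exact absurd heq.symm hxa
        · exact ⟨y, hay⟩
    -- shared-vertex lemmas
    have hsh_in : ∀ a, a ∈ P.verts → (∀ r' b, ¬ P.E r' a b) → (∃ y, P.E r y a) →
        Sh a := by
      intro a ha hout ⟨y, hin⟩
      obtain ⟨i, hi, hcases⟩ := hedge_rev r y a (hPG _ _ _ hin)
      rcases hcases with ⟨hLti, hy, haQ⟩ | ⟨hLti, hy, haQ⟩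
      · -- a = Q i, letter i = (r, true); look at edge i-1 (i.e. j := i + n - 1)
        set j := i + w.length - 1 with hj
        have hj1 : j + 1 = i + w.length := by omega
        have hQj1 : Q (j+1) = a := by rw [hj1, hQper, ← haQ]
        have hLtj1 : Lt (j+1) = (r, true) := by rw [hj1, hLtper]; exact hLti
        by_cases hcj : (Lt j).1 = r
        · have hst := hstep j hcj (Or.inr (hQj1 ▸ ha))
          cases hbj : (Lt j).2 with
          | true => exact absurd (hQj1 ▸ hst.2.1 hbj) (hout r (Q j))
          | false =>
            have : Lt j = Lt (j+1) := hconst j (by rw [hcj, hLtj1])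
            rw [hLtj1] at this
            rw [this] at hbj
            simp at hbj
        · exact hpath_other j hcj a (Or.inr hQj1.symm) ha
      · -- a = Q (i+1), letter i = (r, false); look at edge i+1
        by_cases hcj : (Lt (i+1)).1 = r
        · have hst := hstep (i+1) hcj (Or.inl (haQ ▸ ha))
          cases hbj : (Lt (i+1)).2 with
          | false => exact absurd (haQ ▸ hst.2.2 hbj) (hout r (Q (i+1+1)))
          | true =>
            have : Lt i = Lt (i+1) := hconst i (by rw [hcj, hLti])
            rw [hLti] at this
            rw [← this] at hbj
            simp at hbj
        · exact hpath_other (i+1) hcj a (Or.inl haQ) ha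
    have hsh_out : ∀ a, a ∈ P.verts → (∀ r' y, ¬ P.E r' y a) → (∃ y, P.E r a y) →
        Sh a := by
      intro a ha hnoin ⟨y, hoE⟩
      obtain ⟨i, hi, hcases⟩ := hedge_rev r a y (hPG _ _ _ hoE)
      rcases hcases with ⟨hLti, haQ, hy⟩ | ⟨hLti, haQ, hy⟩
      · -- a = Q (i+1), letter i = (r, true); look at edge i+1
        by_cases hcj : (Lt (i+1)).1 = r
        · have hst := hstep (i+1) hcj (Or.inl (haQ ▸ ha))
          cases hbj : (Lt (i+1)).2 with
          | true => exact absurd (haQ ▸ hst.2.1 hbj) (hnoin r (Q (i+1+1)))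
          | false =>
            have : Lt i = Lt (i+1) := hconst i (by rw [hcj, hLti])
            rw [hLti] at this
            rw [← this] at hbj
            simp at hbj
        · exact hpath_other (i+1) hcj a (Or.inl haQ) ha
      · -- a = Q i, letter i = (r, false); look at edge i-1
        set j := i + w.length - 1 with hj
        have hj1 : j + 1 = i + w.length := by omega
        have hQj1 : Q (j+1) = a := by rw [hj1, hQper, ← haQ]
        have hLtj1 : Lt (j+1) = (r, false) := by rw [hj1, hLtper]; exact hLti
        by_cases hcj : (Lt j).1 = r
        · have hst := hstep j hcj (Or.inr (hQj1 ▸ ha))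
          cases hbj : (Lt j).2 with
          | false => exact absurd (hQj1 ▸ hst.2.2 hbj) (hnoin r (Q j))
          | true =>
            have : Lt j = Lt (j+1) := hconst j (by rw [hcj, hLtj1])
            rw [hLtj1] at this
            rw [this] at hbj
            simp at hbj
        · exact hpath_other j hcj a (Or.inr hQj1.symm) ha
    -- P is closed
    have hClosed : P.Closed := by
      by_contra hcl
      unfold CGraph.Closed at hcl
      push_neg at hcl
      obtain ⟨a, ha, hout⟩ := hcl
      -- a has an in-edge
      obtain ⟨y, r', hadj⟩ := hAdjEx a ha
      rcases hadj with hE | hE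
      · exact absurd hE (hout r' y)
      have hin : P.E r y a := by
        have h := (hPmono _ _ _ hE).1; rwa [h] at hE
      have hSa : Sh a := hsh_in a ha hout ⟨y, hin⟩
      -- find a vertex with no in-edge, by counting
      let F := P.finite.toFinset
      have hmemF : ∀ x, x ∈ F ↔ x ∈ P.verts := fun x => P.finite.mem_toFinset
      let S₁ := F.filter fun x => ∃ z, P.E r x z
      let S₂ := F.filter fun x => ∃ z, P.E r z x
      have h21 : S₂.card ≤ S₁.card := by
        apply Finset.card_le_card_of_injOn
          (fun x => if h : ∃ z, P.E r z x then h.choose else x)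
        · intro x hx
          have hex : ∃ z, P.E r z x := (Finset.mem_filter.mp hx).2
          simp only [dif_pos hex]
          have hspec := hex.choose_spec
          exact Finset.mem_filter.mpr
            ⟨(hmemF _).mpr (P.memL _ _ _ hspec), ⟨x, hspec⟩⟩
        · intro x hx x' hx' heq
          have hex : ∃ z, P.E r z x := (Finset.mem_filter.mp (Finset.mem_coe.mp hx)).2
          have hex' : ∃ z, P.E r z x' := (Finset.mem_filter.mp (Finset.mem_coe.mp hx')).2
          have heq2 : (if h : ∃ z, P.E r z x then h.choose else x) =
              (if h : ∃ z, P.E r z x' then h.choose else x') := heq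
          rw [dif_pos hex, dif_pos hex'] at heq2
          have heq := heq2
          exact hGadm.1 r _ x x' (hPG _ _ _ hex.choose_spec)
            (heq ▸ hPG _ _ _ hex'.choose_spec)
      have hS₁F : S₁ ⊆ F := Finset.filter_subset _ _
      have haF : a ∈ F := (hmemF a).mpr ha
      have haS₁ : a ∉ S₁ := by
        intro h
        obtain ⟨z, hz⟩ := (Finset.mem_filter.mp h).2
        exact hout r z hz
      have hlt : S₁.card < F.card :=
        Finset.card_lt_card ((Finset.ssubset_iff_of_subset hS₁F).mpr ⟨a, haF, haS₁⟩)
      have hnsub : ¬ F ⊆ S₂ := fun h =>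
        absurd (Finset.card_le_card h) (by omega)
      obtain ⟨a', ha'F, ha'S₂⟩ := Finset.not_subset.mp hnsub
      have ha'P : a' ∈ P.verts := (hmemF a').mp ha'F
      have hnoin : ∀ r' z, ¬ P.E r' z a' := by
        intro r' z hz
        have hr' := (hPmono _ _ _ hz).1
        rw [hr'] at hz
        exact ha'S₂ (Finset.mem_filter.mpr ⟨ha'F, z, hz⟩)
      have hne : a ≠ a' := fun h => hnoin r y (h ▸ hin)
      -- a' has an out-edge
      obtain ⟨z, r'', hadj'⟩ := hAdjEx a' ha'P
      rcases hadj' with hE' | hE'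
      · have hr'' := (hPmono _ _ _ hE').1
        rw [hr''] at hE'
        have hSa' : Sh a' := hsh_out a' ha'P hnoin ⟨z, hE'⟩
        exact hne (hone a a' hSa hSa')
      · exact absurd hE' (hnoin r'' z)
    -- successor function on P
    have hσex : ∀ x ∈ P.verts, ∃ y, P.E r x y := by
      intro x hx
      obtain ⟨r₂, y, hE⟩ := hClosed x hx
      have h := (hPmono _ _ _ hE).1
      exact ⟨y, h ▸ hE⟩
    let σ : Quotient π → Quotient π :=
      fun x => if h : ∃ y, P.E r x y then h.choose else x
    have hσE : ∀ x ∈ P.verts, P.E r x (σ x) := by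
      intro x hx
      have hex := hσex x hx
      show P.E r x (if h : ∃ y, P.E r x y then h.choose else x)
      rw [dif_pos hex]
      exact hex.choose_spec
    have hσ_eq : ∀ x y, P.E r x y → σ x = y := by
      intro x y h
      have h1 := hσE x (P.memL _ _ _ h)
      exact hGadm.1 r x _ _ (hPG _ _ _ h1) (hPG _ _ _ h)
    have hσv : ∀ x ∈ P.verts, σ x ∈ P.verts := fun x hx => P.memR _ _ _ (hσE x hx)
    have hσinj : ∀ x y, x ∈ P.verts → y ∈ P.verts → σ x = σ y → x = y := by
      intro x y hx hy h
      exact hGadm.2 r x y (σ y) (h ▸ hPG _ _ _ (hσE x hx)) (hPG _ _ _ (hσE y hy))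
    -- a base position for P
    obtain ⟨r₂, A, B, hABE⟩ : ∃ r₂ A B, P.E r₂ A B := by
      unfold CGraph.Trivial at hPnt; push_neg at hPnt; exact hPnt
    have hr₂ : r₂ = r := (hPmono _ _ _ hABE).1
    subst hr₂
    obtain ⟨k₀, hk₀n, hk₀cases⟩ := hedge_rev r₂ A B (hPG _ _ _ hABE)
    have hk₀ : (Lt k₀).1 = r₂ ∧ Q k₀ ∈ P.verts ∧ Q (k₀+1) ∈ P.verts := by
      rcases hk₀cases with ⟨hL, hA, hB⟩ | ⟨hL, hA, hB⟩
      · exact ⟨by rw [hL], by rw [← hB]; exact P.memR _ _ _ hABE,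
          by rw [← hA]; exact P.memL _ _ _ hABE⟩
      · exact ⟨by rw [hL], by rw [← hA]; exact P.memL _ _ _ hABE,
          by rw [← hB]; exact P.memR _ _ _ hABE⟩
    -- vertex propagation along monochromatic stretches
    have hfwd : ∀ p j, (∀ u, u < j → (Lt (p + u)).1 = r₂) → Q p ∈ P.verts →
        Q (p + j) ∈ P.verts := by
      intro p j
      induction j with
      | zero => intro _ h; exact h
      | succ j ih =>
        intro hcol hp
        exact (hstep (p+j) (hcol j (by omega)) (Or.inl (ih (fun u hu => hcol u (by omega)) hp))).1.2
    have hbwd : ∀ p j, (∀ u, u < j → (Lt (p + u)).1 = r₂) → Q (p + j) ∈ P.verts →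
        Q p ∈ P.verts := by
      intro p j
      induction j with
      | zero => intro _ h; exact h
      | succ j ih =>
        intro hcol hpj
        exact ih (fun u hu => hcol u (by omega))
          (hstep (p+j) (hcol j (by omega)) (Or.inr hpj)).1.1
    -- the run: a monochromatic stretch from a shared vertex back to itself
    obtain ⟨p, ℓ, hℓ1, hrun, hQp, hQpl⟩ :
        ∃ p ℓ : ℕ, 1 ≤ ℓ ∧ (∀ j, j < ℓ → Lt (p + j) = Lt k₀) ∧
          Q p ∈ P.verts ∧ Q (p + ℓ) = Q p := by
      by_cases hcw : ∀ i : ℕ, Lt i = Lt (i+1)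
      · refine ⟨k₀, w.length, hn0, ?_, hk₀.2.1, hQper k₀⟩
        intro j hj
        clear hj
        induction j with
        | zero => rfl
        | succ j ih =>
          show Lt ((k₀ + j) + 1) = Lt k₀
          rw [← hcw (k₀ + j)]
          exact ih
      · push_neg at hcw
        obtain ⟨i₁', hi₁'⟩ := hcw
        have hi₁n : i₁' % w.length < w.length := Nat.mod_lt _ hn0
        have hidxs : idx ((i₁' % w.length) + 1) = idx (i₁' + 1) := by
          simp only [idx]
          exact Fin.ext (Nat.mod_add_mod _ _ _)
        have hi₁ : Lt (i₁' % w.length) ≠ Lt ((i₁' % w.length) + 1) := by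
          rw [hLtmod i₁']
          show ¬ _
          rw [show Lt ((i₁' % w.length) + 1) = Lt (i₁' + 1) from congrArg w.get hidxs]
          exact hi₁'
        set i₁ := i₁' % w.length with hi₁def
        -- forward change point
        have hPfex : ∃ t, Lt (k₀ + t) ≠ Lt (k₀ + t + 1) := by
          refine ⟨i₁ + w.length - k₀, ?_⟩
          have h1 : k₀ + (i₁ + w.length - k₀) = i₁ + w.length := by omega
          rw [h1, hLtper i₁]
          have h2 : i₁ + w.length + 1 = (i₁ + 1) + w.length := by omega
          rw [h2, hLtper (i₁+1)]
          exact hi₁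
        have htfspec := Nat.find_spec hPfex
        have htfmin : ∀ u, u < Nat.find hPfex → Lt (k₀ + u) = Lt (k₀ + u + 1) :=
          fun u hu => not_not.mp (Nat.find_min hPfex hu)
        set tf := Nat.find hPfex with htfdef
        have hfconst : ∀ u, u ≤ tf → Lt (k₀ + u) = Lt k₀ := by
          intro u
          induction u with
          | zero => intro _; rfl
          | succ u ih =>
            intro hu
            have h1 := htfmin u (by omega)
            show Lt (k₀ + u + 1) = Lt k₀
            rw [← h1]
            exact ih (by omega)
        -- backward change point
        have hPbex : ∃ t, Lt (k₀ + w.length - 1 - t) ≠ Lt (k₀ + w.length - t) := by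
          refine ⟨k₀ + w.length - 1 - i₁, ?_⟩
          have h1 : k₀ + w.length - 1 - (k₀ + w.length - 1 - i₁) = i₁ := by omega
          have h2 : k₀ + w.length - (k₀ + w.length - 1 - i₁) = i₁ + 1 := by omega
          rw [h1, h2]
          exact hi₁
        have htbspec := Nat.find_spec hPbex
        have htbmin : ∀ u, u < Nat.find hPbex →
            Lt (k₀ + w.length - 1 - u) = Lt (k₀ + w.length - u) :=
          fun u hu => not_not.mp (Nat.find_min hPbex hu)
        have htbub : Nat.find hPbex ≤ k₀ + w.length - 1 - i₁ :=
          Nat.find_min' hPbex (by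
            have h1 : k₀ + w.length - 1 - (k₀ + w.length - 1 - i₁) = i₁ := by omega
            have h2 : k₀ + w.length - (k₀ + w.length - 1 - i₁) = i₁ + 1 := by omega
            rw [h1, h2]
            exact hi₁)
        set tb := Nat.find hPbex with htbdef
        have htbub2 : tb ≤ k₀ + w.length - 1 := by omega
        have hbconst : ∀ u, u ≤ tb → Lt (k₀ + w.length - u) = Lt k₀ := by
          intro u
          induction u with
          | zero =>
            intro _
            show Lt (k₀ + w.length - 0) = Lt k₀
            rw [Nat.sub_zero, hLtper]
          | succ u ih =>
            intro hu
            have h1 := htbmin u (by omega)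
            have h2 : k₀ + w.length - (u+1) = k₀ + w.length - 1 - u := by omega
            rw [h2, h1]
            exact ih (by omega)
        -- assemble the run
        have hrun2 : ∀ j, j < tb + tf + 1 → Lt (k₀ + w.length - tb + j) = Lt k₀ := by
          intro j hj
          by_cases hjtb : j ≤ tb
          · have h1 : k₀ + w.length - tb + j = k₀ + w.length - (tb - j) := by omega
            rw [h1]
            exact hbconst (tb - j) (by omega)
          · have h1 : k₀ + w.length - tb + j = k₀ + (j - tb) + w.length := by omega
            rw [h1, hLtper]
            exact hfconst (j - tb) (by omega)
        have hQpP : Q (k₀ + w.length - tb) ∈ P.verts := by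
          apply hbwd (k₀ + w.length - tb) tb
          · intro u hu
            rw [hrun2 u (by omega)]
            exact hk₀.1
          · have h1 : k₀ + w.length - tb + tb = k₀ + w.length := by omega
            rw [h1, hQper]
            exact hk₀.2.1
        have hQplP : Q (k₀ + w.length - tb + (tb + tf + 1)) ∈ P.verts := by
          apply hfwd
          · intro u hu
            rw [hrun2 u (by omega)]
            exact hk₀.1
          · exact hQpP
        -- left end is shared
        have hcL : (Lt (k₀ + w.length - 1 - tb)).1 ≠ r₂ := by
          intro hc
          apply htbspec
          have h1 : k₀ + w.length - tb = (k₀ + w.length - 1 - tb) + 1 := by omega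
          rw [h1]
          apply hconst
          rw [hc, ← h1]
          have h2 := hrun2 0 (by omega)
          simp only [Nat.add_zero] at h2
          rw [h2]
          exact hk₀.1.symm
        have hShL : Sh (Q (k₀ + w.length - tb)) := by
          apply hpath_other (k₀ + w.length - 1 - tb) hcL _ _ hQpP
          right
          exact congrArg Q (by omega)
        -- right end is shared
        have hcR : (Lt (k₀ + w.length - tb + (tb + tf + 1))).1 ≠ r₂ := by
          intro hc
          apply htfspec
          apply hconst
          rw [hfconst tf le_rfl, hk₀.1]
          have h1 : k₀ + w.length - tb + (tb + tf + 1) = (k₀ + tf + 1) + w.length := by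
            omega
          rw [h1, hLtper] at hc
          exact hc.symm
        have hShR : Sh (Q (k₀ + w.length - tb + (tb + tf + 1))) :=
          hpath_other (k₀ + w.length - tb + (tb + tf + 1)) hcR _ (Or.inl rfl) hQplP
        exact ⟨k₀ + w.length - tb, tb + tf + 1, by omega, hrun2, hQpP,
          hone _ _ hShR hShL⟩
    have hrunc : ∀ j, j < ℓ → (Lt (p + j)).1 = r₂ := fun j hj => by
      rw [hrun j hj]; exact hk₀.1
    have hverts : ∀ j, j ≤ ℓ → Q (p + j) ∈ P.verts := fun j hj =>
      hfwd p j (fun u hu => hrunc u (by omega)) hQp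
    -- the run winds around P, so σ^[ℓ] fixes Q p
    have hfix : σ^[ℓ] (Q p) = Q p := by
      cases hb0c : (Lt k₀).2 with
      | false =>
        have hedges : ∀ j, j < ℓ → σ (Q (p+j)) = Q (p+j+1) := by
          intro j hj
          have hst := hstep (p+j) (hrunc j hj) (Or.inl (hverts j (le_of_lt hj)))
          exact hσ_eq _ _ (hst.2.2 (by rw [hrun j hj, hb0c]))
        have hiter : ∀ j, j ≤ ℓ → σ^[j] (Q p) = Q (p + j) := by
          intro j
          induction j with
          | zero => intro _; rfl
          | succ j ih =>
            intro hj
            rw [Function.iterate_succ_apply', ih (by omega), hedges j (by omega)]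
            exact congrArg Q (by omega)
        rw [hiter ℓ le_rfl, hQpl]
      | true =>
        have hedges : ∀ j, j < ℓ → σ (Q (p+j+1)) = Q (p+j) := by
          intro j hj
          have hst := hstep (p+j) (hrunc j hj) (Or.inl (hverts j (le_of_lt hj)))
          exact hσ_eq _ _ (hst.2.1 (by rw [hrun j hj, hb0c]))
        have hiter : ∀ j, j ≤ ℓ → σ^[j] (Q (p + ℓ)) = Q (p + (ℓ - j)) := by
          intro j
          induction j with
          | zero => intro _; rfl
          | succ j ih =>
            intro hj
            rw [Function.iterate_succ_apply', ih (by omega)]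
            have h1 : ℓ - j = (ℓ - (j+1)) + 1 := by omega
            rw [h1]
            exact hedges (ℓ - (j+1)) (by omega)
        have h2 := hiter ℓ le_rfl
        rw [Nat.sub_self, hQpl] at h2
        exact h2
    -- the orbit of Q p exhausts P.verts
    have hiterv : ∀ i : ℕ, σ^[i] (Q p) ∈ P.verts := by
      intro i
      induction i with
      | zero => exact hQp
      | succ i ih => rw [Function.iterate_succ_apply']; exact hσv _ ih
    have hiterper : ∀ i : ℕ, σ^[i + ℓ] (Q p) = σ^[i] (Q p) := by
      intro i; rw [Function.iterate_add_apply, hfix]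
    have hmem : ∀ i : ℕ, ∃ i', i' < ℓ ∧ σ^[i'] (Q p) = σ^[i] (Q p) := by
      intro i
      induction i using Nat.strong_induction_on with
      | _ i ih =>
        by_cases h : i < ℓ
        · exact ⟨i, h, rfl⟩
        · have h1 : i - ℓ + ℓ = i := by omega
          have h2 := hiterper (i - ℓ)
          rw [h1] at h2
          obtain ⟨i', hi', he⟩ := ih (i - ℓ) (by omega)
          exact ⟨i', hi', by rw [he, h2]⟩
    have horbit : ∀ x ∈ P.verts, ∃ i, i < ℓ ∧ σ^[i] (Q p) = x := by
      intro x hx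
      have hchain := hPcomp.2.1 (Q p) hQp x hx
      clear hx
      induction hchain with
      | refl => exact ⟨0, by omega, rfl⟩
      | tail hab hbc ih =>
        rename_i b c
        obtain ⟨i, hi, he⟩ := ih
        obtain ⟨r₃, hE | hE⟩ := hbc
        · have hσb : σ b = c := hσ_eq b c (by
            have h := (hPmono _ _ _ hE).1
            rwa [h] at hE)
          obtain ⟨i', hi', he'⟩ := hmem (i+1)
          exact ⟨i', hi', by rw [he', Function.iterate_succ_apply', he, hσb]⟩
        · have hσc : σ c = b := hσ_eq c b (by
            have h := (hPmono _ _ _ hE).1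
            rwa [h] at hE)
          have hcP : c ∈ P.verts := P.memL _ _ _ hE
          obtain ⟨i₀, hi₀⟩ : ∃ i₀, i + ℓ = i₀ + 1 := ⟨i + ℓ - 1, by omega⟩
          have h2 : σ (σ^[i₀] (Q p)) = b := by
            rw [← Function.iterate_succ_apply' σ i₀ (Q p)]
            show σ^[i₀ + 1] (Q p) = b
            rw [← hi₀, hiterper, he]
          have h3 : c = σ^[i₀] (Q p) :=
            hσinj c _ hcP (hiterv _) (by rw [hσc, h2])
          obtain ⟨i', hi', he'⟩ := hmem i₀
          exact ⟨i', hi', by rw [he', ← h3]⟩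
    -- edge count = vertex count
    have hm : P.edgeCount = Set.ncard P.verts := by
      unfold CGraph.edgeCount
      rw [← Nat.card_coe_set_eq]
      have hbij : Function.Bijective
          (fun e : {pr : Fin s × Quotient π × Quotient π // P.E pr.1 pr.2.1 pr.2.2} =>
            (⟨e.1.2.1, P.memL _ _ _ e.2⟩ : P.verts)) := by
        constructor
        · rintro ⟨⟨ra, xa, ya⟩, hEa⟩ ⟨⟨rb, xb, yb⟩, hEb⟩ hab
          simp only [Subtype.mk.injEq] at hab ⊢
          subst hab
          have h5 : rb = ra := ((hPmono _ _ _ hEb).1).trans ((hPmono _ _ _ hEa).1).symm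
          subst h5
          have h6 : ya = yb := hGadm.1 rb xa _ _ (hPG _ _ _ hEa) (hPG _ _ _ hEb)
          simp [h6]
        · rintro ⟨x, hx⟩
          exact ⟨⟨(r₂, x, σ x), hσE x hx⟩, rfl⟩
      exact Nat.card_congr (Equiv.ofBijective _ hbij)
    -- bound edge count by ℓ and by n
    have hmℓ : P.edgeCount ≤ ℓ := by
      rw [hm]
      have hsub : P.verts ⊆ ↑((Finset.range ℓ).image fun j => σ^[j] (Q p)) := by
        intro x hx
        obtain ⟨i, hi, he⟩ := horbit x hx
        exact Finset.mem_coe.mpr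
          (Finset.mem_image.mpr ⟨i, Finset.mem_range.mpr hi, he⟩)
      have h7 := Set.ncard_le_ncard hsub (Finset.finite_toSet _)
      rw [Set.ncard_coe_finset] at h7
      exact le_trans h7 (le_trans Finset.card_image_le (le_of_eq (Finset.card_range ℓ)))
    have hmn : P.edgeCount ≤ w.length := by
      rw [hm]
      have hsub : P.verts ⊆
          ↑(Finset.image (fun k : Fin w.length => Quotient.mk π k) Finset.univ) := by
        intro x hx
        obtain ⟨k, _, hk⟩ := hPcomp.1.1 hx
        exact Finset.mem_coe.mpr (Finset.mem_image.mpr ⟨k, Finset.mem_univ _, hk⟩)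
      have h7 := Set.ncard_le_ncard hsub (Finset.finite_toSet _)
      rw [Set.ncard_coe_finset] at h7
      refine le_trans h7 (le_trans Finset.card_image_le ?_)
      simp
    -- strong admissibility: d r₂ = edgeCount
    have hdr : (P.edgeCount : ℕ∞) = d r₂ := (hπ.2.2 r₂ P ⟨hPcomp, hPnt⟩).1 hClosed
    -- final packaging
    obtain ⟨w₁, w₂, v, h1, h2⟩ := exists_cyclic_factor w hn0 p P.edgeCount hmn
      (List.replicate P.edgeCount (Lt k₀)) List.length_replicate
      (by
        intro j hj
        rw [List.getElem_replicate]
        exact (hgetLt (p + j)).trans (hrun j (by omega)))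
    refine ⟨w₁, w₂, v, List.replicate P.edgeCount (Lt k₀), h1, h2, r₂,
      Or.inr (Or.inr ⟨P.edgeCount, hdr.symm, ?_⟩)⟩
    have hLk : ((Lt k₀).1, (Lt k₀).2) = Lt k₀ := rfl
    cases hbk : (Lt k₀).2 with
    | true => left; rw [← hLk, hk₀.1, hbk]
    | false => right; rw [← hLk, hk₀.1, hbk]
end
end

section
/- If A is a non-empty set of positive integers and D = gcd(A), then a_N^(A) > 0 for every sufficiently large multiple N of D; that is, there exists N_0 such that every multiple N of D with N ≥ N_0 satisfies S_N^(A) ≠ ∅. -/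
noncomputable section

open Filter Topology

/-- `permSet A N` is `S_N^(A)`: the set of permutations of `{1,…,N}` (modeled as
`Fin N`) all of whose cycles have length belonging to `A`; the length of the cycle
of `σ` containing `i` is the minimal period of `i` under `σ`. -/
def permSet (A : Set ℕ) (N : ℕ) : Set (Equiv.Perm (Fin N)) :=
  {σ | ∀ i : Fin N, Function.minimalPeriod (⇑σ) i ∈ A}

/-- `pN A k N` is `p_N^(A)(k)`: the probability that, in a uniformly random
permutation from `S_N^(A)`, the first element belongs to a cycle of length `k`. -/
def pN (A : Set ℕ) (k N : ℕ) : ℝ :=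
  (Nat.card {σ : Equiv.Perm (Fin N) // σ ∈ permSet A N ∧
      ∃ i : Fin N, (i : ℕ) = 0 ∧ Function.minimalPeriod (⇑σ) i = k} : ℝ) /
    (Nat.card ↥(permSet A N) : ℝ)

open Fin.NatCast in
private lemma iterate_finRotate (n : ℕ) (k : ℕ) (i : Fin (n + 1)) :
    (⇑(finRotate (n + 1)))^[k] i = i + (k : Fin (n + 1)) := by
  induction k with
  | zero => simp
  | succ k ih =>
      rw [Function.iterate_succ_apply', ih, finRotate_succ_apply]
      push_cast
      rw [add_assoc]

open Fin.NatCast in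
private lemma minimalPeriod_finRotate (n : ℕ) (i : Fin (n + 1)) :
    Function.minimalPeriod (⇑(finRotate (n + 1))) i = n + 1 := by
  have hper : ∀ k : ℕ, Function.IsPeriodicPt (⇑(finRotate (n + 1))) k i ↔ (n + 1) ∣ k := by
    intro k
    rw [Function.IsPeriodicPt, Function.IsFixedPt, iterate_finRotate]
    constructor
    · intro h
      have h0 : (k : Fin (n + 1)) = 0 := by
        have := congrArg (fun z => z - i) h
        simpa [add_sub_cancel_left, sub_self, add_comm] using this
      exact (Fin.natCast_eq_zero).mp h0
    · intro h
      rw [(Fin.natCast_eq_zero).mpr h, add_zero]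
  have h1 : Function.IsPeriodicPt (⇑(finRotate (n + 1))) (n + 1) i := (hper _).mpr dvd_rfl
  have h2 : Function.minimalPeriod (⇑(finRotate (n + 1))) i ∣ n + 1 := h1.minimalPeriod_dvd
  have h3 : (n + 1) ∣ Function.minimalPeriod (⇑(finRotate (n + 1))) i :=
    (hper _).mp (Function.isPeriodicPt_minimalPeriod _ _)
  exact Nat.dvd_antisymm h2 h3

private lemma iterate_sumCongr_inl {α β : Type*} (σ : Equiv.Perm α) (τ : Equiv.Perm β)
    (k : ℕ) (x : α) :
    (⇑(σ.sumCongr τ))^[k] (Sum.inl x) = Sum.inl ((⇑σ)^[k] x) := by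
  induction k with
  | zero => rfl
  | succ k ih => rw [Function.iterate_succ_apply', Function.iterate_succ_apply', ih]; rfl

private lemma iterate_sumCongr_inr {α β : Type*} (σ : Equiv.Perm α) (τ : Equiv.Perm β)
    (k : ℕ) (x : β) :
    (⇑(σ.sumCongr τ))^[k] (Sum.inr x) = Sum.inr ((⇑τ)^[k] x) := by
  induction k with
  | zero => rfl
  | succ k ih => rw [Function.iterate_succ_apply', Function.iterate_succ_apply', ih]; rfl

private lemma iterate_permCongr {α β : Type*} (e : α ≃ β) (σ : Equiv.Perm α) (k : ℕ) (x : α) :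
    (⇑(e.permCongr σ))^[k] (e x) = e ((⇑σ)^[k] x) := by
  induction k with
  | zero => rfl
  | succ k ih =>
      rw [Function.iterate_succ_apply', Function.iterate_succ_apply', ih,
        Equiv.permCongr_apply, Equiv.symm_apply_apply]

/-- Every `N` in the additive submonoid generated by `A` admits a permutation all of
whose cycle lengths lie in `A`. -/
private lemma permSet_nonempty_of_mem_closure (A : Set ℕ) {N : ℕ}
    (hN : N ∈ AddSubmonoid.closure A) : (permSet A N).Nonempty := by
  induction hN using AddSubmonoid.closure_induction with
  | mem a ha =>
      rcases Nat.eq_zero_or_pos a with rfl | hpos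
      · exact ⟨1, fun i => i.elim0⟩
      · obtain ⟨n, rfl⟩ := Nat.exists_eq_add_of_lt hpos
        rw [zero_add] at *
        exact ⟨finRotate (n + 1), fun i => by
          rw [minimalPeriod_finRotate]; exact ha⟩
  | zero => exact ⟨1, fun i => i.elim0⟩
  | add m n hm hn ihm ihn =>
      obtain ⟨σ, hσ⟩ := ihm
      obtain ⟨τ, hτ⟩ := ihn
      refine ⟨(finSumFinEquiv (m := m) (n := n)).permCongr (σ.sumCongr τ), fun i => ?_⟩
      obtain ⟨x, rfl⟩ := finSumFinEquiv.surjective i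
      have hmp : Function.minimalPeriod (⇑(finSumFinEquiv.permCongr (σ.sumCongr τ)))
          (finSumFinEquiv x) = Function.minimalPeriod (⇑(σ.sumCongr τ)) x := by
        rw [Function.minimalPeriod_eq_minimalPeriod_iff]
        intro k
        rw [Function.IsPeriodicPt, Function.IsPeriodicPt, Function.IsFixedPt,
          Function.IsFixedPt, iterate_permCongr]
        exact finSumFinEquiv.apply_eq_iff_eq
      rw [hmp]
      cases x with
      | inl y =>
          have : Function.minimalPeriod (⇑(σ.sumCongr τ)) (Sum.inl y) =
              Function.minimalPeriod (⇑σ) y := by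
            rw [Function.minimalPeriod_eq_minimalPeriod_iff]
            intro k
            rw [Function.IsPeriodicPt, Function.IsPeriodicPt, Function.IsFixedPt,
              Function.IsFixedPt, iterate_sumCongr_inl]
            exact ⟨fun h => Sum.inl.inj h, fun h => by rw [h]⟩
          rw [this]; exact hσ y
      | inr y =>
          have : Function.minimalPeriod (⇑(σ.sumCongr τ)) (Sum.inr y) =
              Function.minimalPeriod (⇑τ) y := by
            rw [Function.minimalPeriod_eq_minimalPeriod_iff]
            intro k
            rw [Function.IsPeriodicPt, Function.IsPeriodicPt, Function.IsFixedPt,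
              Function.IsFixedPt, iterate_sumCongr_inr]
            exact ⟨fun h => Sum.inr.inj h, fun h => by rw [h]⟩
          rw [this]; exact hτ y

/-- If `A` is a non-empty set of positive integers and `D = gcd A`, then
`S_N^(A) ≠ ∅` for every sufficiently large multiple `N` of `D`. -/
theorem permSet_nonempty_of_large_multiple_of_gcd (A : Set ℕ) (hA : A.Nonempty)
    (hpos : ∀ a ∈ A, 0 < a) (D : ℕ)
    (hdvd : ∀ a ∈ A, D ∣ a) (hgcd : ∀ e : ℕ, (∀ a ∈ A, e ∣ a) → e ∣ D) :
    ∃ N₀ : ℕ, ∀ N : ℕ, N₀ ≤ N → D ∣ N → (permSet A N).Nonempty := by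
  set T := AddSubmonoid.closure A with hT
  obtain ⟨a₀, ha₀⟩ := hA
  have hD : 0 < D := Nat.pos_of_dvd_of_pos (hdvd a₀ ha₀) (hpos a₀ ha₀)
  -- the subgroup of ℤ generated by A is cyclic, generated by (±) D
  obtain ⟨d, hd⟩ := Int.subgroup_cyclic (AddSubgroup.closure ((Nat.cast : ℕ → ℤ) '' A))
  have hdA : ∀ a ∈ A, d ∣ (a : ℤ) := by
    intro a ha
    have hmem : (a : ℤ) ∈ AddSubgroup.closure ((Nat.cast : ℕ → ℤ) '' A) :=
      AddSubgroup.subset_closure ⟨a, ha, rfl⟩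
    rw [hd, AddSubgroup.mem_closure_singleton] at hmem
    obtain ⟨n, hn⟩ := hmem
    exact ⟨n, by rw [← hn, smul_eq_mul]; ring⟩
  have hdD : d.natAbs ∣ D :=
    hgcd _ (fun a ha => Int.natCast_dvd_natCast.mp (Int.natAbs_dvd.mpr (hdA a ha)))
  have hDmem : (D : ℤ) ∈ AddSubgroup.closure ((Nat.cast : ℕ → ℤ) '' A) := by
    have hdvdD : d ∣ (D : ℤ) := Int.natAbs_dvd.mp (Int.natCast_dvd_natCast.mpr hdD)
    obtain ⟨k, hk⟩ := hdvdD
    rw [hd, AddSubgroup.mem_closure_singleton]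
    exact ⟨k, by rw [hk, smul_eq_mul]; ring⟩
  -- D is a difference of two elements of T
  have key : ∃ x y : ℕ, x ∈ T ∧ y ∈ T ∧ (x : ℤ) - y = (D : ℤ) := by
    let G : AddSubgroup ℤ :=
      { carrier := {z | ∃ x y : ℕ, x ∈ T ∧ y ∈ T ∧ (x : ℤ) - y = z}
        zero_mem' := ⟨0, 0, zero_mem _, zero_mem _, by simp⟩
        add_mem' := by
          rintro z w ⟨x1, y1, hx1, hy1, rfl⟩ ⟨x2, y2, hx2, hy2, rfl⟩
          exact ⟨x1 + x2, y1 + y2, add_mem hx1 hx2, add_mem hy1 hy2, by push_cast; ring⟩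
        neg_mem' := by
          rintro z ⟨x, y, hx, hy, rfl⟩
          exact ⟨y, x, hy, hx, by ring⟩ }
    have hle : AddSubgroup.closure ((Nat.cast : ℕ → ℤ) '' A) ≤ G := by
      rw [AddSubgroup.closure_le]
      rintro z ⟨a, ha, rfl⟩
      exact ⟨a, 0, AddSubmonoid.subset_closure ha, zero_mem _, by simp⟩
    exact hle hDmem
  obtain ⟨x, y, hx, hy, hxy⟩ := key
  have hxyN : x = y + D := by omega
  -- every element of T is a multiple of D
  have hTD : ∀ n ∈ T, D ∣ n := by
    intro n hn
    induction hn using AddSubmonoid.closure_induction with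
    | mem a ha => exact hdvd a ha
    | zero => exact dvd_zero D
    | add a b _ _ iha ihb => exact dvd_add iha ihb
  obtain ⟨c, hc⟩ := hTD y hy
  refine ⟨c * c * D, fun N hN hDN => ?_⟩
  obtain ⟨m, rfl⟩ := hDN
  have hm : c * c ≤ m := by
    by_contra hcon
    push_neg at hcon
    nlinarith
  refine permSet_nonempty_of_mem_closure A ?_
  rcases Nat.eq_zero_or_pos c with rfl | hcpos
  · -- y = 0, so x = D and D * m = m • x ∈ T
    have hxD : x = D := by omega
    have := nsmul_mem hx m
    rwa [smul_eq_mul, hxD, mul_comm] at this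
  · -- write m = c * q + r, then D * m = r • x + (q - r) • y
    set q := m / c with hq
    set r := m % c with hr
    have hrc : r < c := Nat.mod_lt _ hcpos
    have hcq : c ≤ q := (Nat.le_div_iff_mul_le hcpos).mpr (by nlinarith)
    have hrq : r ≤ q := le_trans (le_of_lt hrc) hcq
    obtain ⟨t, ht⟩ := Nat.exists_eq_add_of_le hrq
    have hm2 : c * q + r = m := Nat.div_add_mod m c
    have hmem : r • x + t • y ∈ T := add_mem (nsmul_mem hx r)
      (nsmul_mem hy t)
    have heq : r • x + t • y = D * m := by
      rw [smul_eq_mul, smul_eq_mul, hxyN, hc, ← hm2, ht]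
      ring
    rwa [heq] at hmem
end
end
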